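/- arXiv:1209.5313 — 6 statements merged into one kernel-verified Lean document; each statement's English description precedes it below -/
import Mathlib

section
/- For every integer k ≥ 7, r(k,3) > 2^k·ln 2, where r(k,l) = 1 / ( ((k+1)/2^k)^{l−1}·(k/2^k) + 2·√( ((k+1)/2^k)^{l−1} · (1/2^k) · (1 − ((k+1)/2^k)^l) ) ); equivalently, 2^k·(ln 2)·( ((k+1)/2^k)^2·(k/2^k) + 2·√( ((k+1)/2^k)^2·(1/2^k)·(1 − ((k+1)/2^k)^3) ) ) < 1 for all k ≥ 7. -/
/-- The density `r(k,l)` from the paper: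
`r(k,l) = 1 / ( ((k+1)/2^k)^(l-1) * (k/2^k)
  + 2 * √( ((k+1)/2^k)^(l-1) * (1/2^k) * (1 - ((k+1)/2^k)^l) ) )`. -/
noncomputable def rkl (k l : ℕ) : ℝ :=
  1 / ( ((k + 1 : ℝ) / 2 ^ k) ^ (l - 1) * (k / 2 ^ k)
    + 2 * Real.sqrt (((k + 1 : ℝ) / 2 ^ k) ^ (l - 1) * (1 / 2 ^ k)
        * (1 - ((k + 1 : ℝ) / 2 ^ k) ^ l)) )

lemma aux1 (k : ℕ) (hk : 7 ≤ k) : 2 * (k + 1) ^ 2 ≤ 2 ^ k := by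
  induction k, hk using Nat.le_induction with
  | base => decide
  | succ n hn ih =>
    have : 2 * (n + 1 + 1) ^ 2 ≤ 2 * (2 * (n + 1) ^ 2) := by nlinarith
    calc 2 * (n + 1 + 1) ^ 2 ≤ 2 * (2 * (n + 1) ^ 2) := this
      _ ≤ 2 * 2 ^ n := by omega
      _ = 2 ^ (n + 1) := by ring

lemma aux2 (k : ℕ) (hk : 7 ≤ k) : 128 * k ≤ 7 * 2 ^ k := by
  induction k, hk using Nat.le_induction with
  | base => decide
  | succ n hn ih =>
    have h128 : 128 ≤ 7 * 2 ^ n := by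
      calc (128 : ℕ) = 128 * 1 := by ring
        _ ≤ 7 * 2 ^ 7 := by decide
        _ ≤ 7 * 2 ^ n := by
            have := Nat.pow_le_pow_right (by norm_num : 1 ≤ 2) hn
            omega
    calc 128 * (n + 1) = 128 * n + 128 := by ring
      _ ≤ 7 * 2 ^ n + 7 * 2 ^ n := by omega
      _ = 7 * 2 ^ (n + 1) := by ring

/-- For every integer `k ≥ 7`, `r(k,3) > 2^k * ln 2`. -/
theorem r_k_three_gt (k : ℕ) (hk : 7 ≤ k) :
    rkl k 3 > 2 ^ k * Real.log 2 := by
  have h2k : (0:ℝ) < 2 ^ k := by positivity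
  have hkpos : (0:ℝ) < k := by
    have : (7:ℝ) ≤ k := by exact_mod_cast hk
    linarith
  have ha1 : 2 * ((k:ℝ) + 1) ^ 2 ≤ 2 ^ k := by exact_mod_cast aux1 k hk
  have ha2 : 128 * (k:ℝ) ≤ 7 * 2 ^ k := by exact_mod_cast aux2 k hk
  set x : ℝ := ((k:ℝ) + 1) / 2 ^ k with hxdef
  have hx0 : 0 < x := by positivity
  have hx2 : x ^ 2 ≤ 1 / (2 * 2 ^ k) := by
    rw [hxdef, div_pow, div_le_div_iff₀ (by positivity) (by positivity)]
    calc ((k:ℝ) + 1) ^ 2 * (2 * 2 ^ k) = (2 * ((k:ℝ)+1)^2) * 2 ^ k := by ring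
      _ ≤ 2 ^ k * 2 ^ k := by nlinarith
      _ = 1 * ((2:ℝ)^k)^2 := by ring
  have hkd : (k:ℝ) / 2 ^ k ≤ 7 / 128 := by
    rw [div_le_div_iff₀ h2k (by norm_num)]
    linarith
  have hrkl : rkl k 3 = 1 / (x ^ 2 * (k / 2 ^ k)
      + 2 * Real.sqrt (x ^ 2 * (1 / 2 ^ k) * (1 - x ^ 3))) := by
    unfold rkl
    norm_num [hxdef]
  have hS : Real.sqrt (x ^ 2 * (1 / 2 ^ k) * (1 - x ^ 3))
      ≤ Real.sqrt 2 / (2 * 2 ^ k) := by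
    have hy : (0:ℝ) ≤ Real.sqrt 2 / (2 * 2 ^ k) := by positivity
    have hsq : (Real.sqrt 2 / (2 * 2 ^ k)) ^ 2 = 2 / (2 * 2 ^ k) ^ 2 := by
      rw [div_pow, Real.sq_sqrt (by norm_num : (0:ℝ) ≤ 2)]
    have hbound : x ^ 2 * (1 / 2 ^ k) * (1 - x ^ 3)
        ≤ (Real.sqrt 2 / (2 * 2 ^ k)) ^ 2 := by
      rw [hsq]
      have h1 : x ^ 2 * (1 / 2 ^ k) * (1 - x ^ 3) ≤ x ^ 2 * (1 / 2 ^ k) := by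
        have hx3 : (0:ℝ) ≤ x ^ 2 * (1 / 2 ^ k) * x ^ 3 := by positivity
        nlinarith [hx3]
      have h2 : x ^ 2 * (1 / 2 ^ k) ≤ 2 / (2 * 2 ^ k) ^ 2 := by
        have hmul := mul_le_mul_of_nonneg_right hx2
          (by positivity : (0:ℝ) ≤ 1 / 2 ^ k)
        rw [show (2:ℝ) / (2 * 2 ^ k) ^ 2 = 1 / (2 * 2 ^ k) * (1 / 2 ^ k) by
          field_simp]
        exact hmul
      linarith
    calc Real.sqrt (x ^ 2 * (1 / 2 ^ k) * (1 - x ^ 3))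
        ≤ Real.sqrt ((Real.sqrt 2 / (2 * 2 ^ k)) ^ 2) := Real.sqrt_le_sqrt hbound
      _ = Real.sqrt 2 / (2 * 2 ^ k) := Real.sqrt_sq hy
  have hDpos : 0 < x ^ 2 * (k / 2 ^ k)
      + 2 * Real.sqrt (x ^ 2 * (1 / 2 ^ k) * (1 - x ^ 3)) := by
    have : 0 < x ^ 2 * (k / 2 ^ k) := by positivity
    have h := Real.sqrt_nonneg (x ^ 2 * (1 / 2 ^ k) * (1 - x ^ 3))
    linarith
  rw [hrkl, gt_iff_lt, lt_div_iff₀ hDpos]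
  have hT1 : 2 ^ k * (x ^ 2 * ((k:ℝ) / 2 ^ k)) ≤ 7 / 256 := by
    have h1 : x ^ 2 * ((k:ℝ) / 2 ^ k) ≤ (1 / (2 * 2 ^ k)) * (7 / 128) := by
      apply mul_le_mul hx2 hkd (by positivity) (by positivity)
    calc 2 ^ k * (x ^ 2 * ((k:ℝ) / 2 ^ k)) ≤ 2 ^ k * ((1 / (2 * 2 ^ k)) * (7 / 128)) := by
          apply mul_le_mul_of_nonneg_left h1 (le_of_lt h2k)
      _ = 7 / 256 := by field_simp; ring
  have hT2 : 2 ^ k * (2 * Real.sqrt (x ^ 2 * (1 / 2 ^ k) * (1 - x ^ 3)))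
      ≤ Real.sqrt 2 := by
    calc 2 ^ k * (2 * Real.sqrt (x ^ 2 * (1 / 2 ^ k) * (1 - x ^ 3)))
        ≤ 2 ^ k * (2 * (Real.sqrt 2 / (2 * 2 ^ k))) := by
          apply mul_le_mul_of_nonneg_left _ (le_of_lt h2k)
          linarith
      _ = Real.sqrt 2 := by field_simp
  have hlog : Real.log 2 < 0.6931471808 := Real.log_two_lt_d9
  have hlogpos : 0 < Real.log 2 := Real.log_pos (by norm_num)
  have hsqrt2 : Real.sqrt 2 < 1.41422 := by
    rw [show (1.41422:ℝ) = Real.sqrt (1.41422 ^ 2) from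
      (Real.sqrt_sq (by norm_num)).symm]
    apply Real.sqrt_lt_sqrt (by norm_num)
    norm_num
  have hsqrt2pos : 0 ≤ Real.sqrt 2 := Real.sqrt_nonneg 2
  have key : 2 ^ k * (x ^ 2 * ((k:ℝ) / 2 ^ k)
      + 2 * Real.sqrt (x ^ 2 * (1 / 2 ^ k) * (1 - x ^ 3))) ≤ 7 / 256 + Real.sqrt 2 := by
    rw [mul_add]
    linarith
  calc 2 ^ k * Real.log 2 * (x ^ 2 * (k / 2 ^ k)
        + 2 * Real.sqrt (x ^ 2 * (1 / 2 ^ k) * (1 - x ^ 3)))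
      = Real.log 2 * (2 ^ k * (x ^ 2 * (k / 2 ^ k)
        + 2 * Real.sqrt (x ^ 2 * (1 / 2 ^ k) * (1 - x ^ 3)))) := by ring
    _ ≤ Real.log 2 * (7 / 256 + Real.sqrt 2) := by
        apply mul_le_mul_of_nonneg_left key (le_of_lt hlogpos)
    _ < 1 := by nlinarith
end

section
/- If a 2-CNF formula F contains no bicycle (of any length t ≥ 2) in its implication graph, then F is satisfiable. -/
open Finset

/-- A literal over `n` variables: a variable together with a sign (`true` = positive). -/
abbrev Lit (n : ℕ) := Fin n × Bool

/-- The negation of a literal. -/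
def Lit.neg {n : ℕ} (w : Lit n) : Lit n := (w.1, !w.2)

/-- A `k`-clause over `n` variables: a set of `k` literals on `k` distinct variables. -/
abbrev Clause (n k : ℕ) :=
  {C : Finset (Lit n) // C.card = k ∧ (C.image Prod.fst).card = k}

/-- The number of positive literals in a clause. -/
def Clause.posCount {n k : ℕ} (C : Clause n k) : ℕ :=
  (C.1.filter fun p => p.2 = true).card

/-- The 2-clause `c = (w ∨ w')` gives rise to the directed edge `a → b` of the
implication graph iff `(a, b) = (¬w, w')` or `(a, b) = (¬w', w)`,
i.e. iff `¬a ∈ c`, `b ∈ c` and `b` is not the literal `¬a` itself. -/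
def EdgeFrom {n : ℕ} (c : Clause n 2) (a b : Lit n) : Prop :=
  a.neg ∈ c.1 ∧ b ∈ c.1 ∧ a.neg ≠ b

/-- The implication graph of the 2-CNF formula `F` has an edge `a → b`. -/
def ImpEdge {n : ℕ} (F : Finset (Clause n 2)) (a b : Lit n) : Prop :=
  ∃ c ∈ F, EdgeFrom c a b

/-- `w : Fin t → Lit n` is a bicycle (of length `t ≥ 2`) in the implication graph of `F`:
a sequence of `t` literals of distinct variables forming a directed path
`w 0 → w 1 → ⋯ → w (t-1)`, together with two additional directed edges `u → w 0` and
`w (t-1) → v` for some `u, v ∈ {w 0, …, w (t-1), ¬w 0, …, ¬w (t-1)}`. -/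
def IsBicycle {n t : ℕ} (F : Finset (Clause n 2)) (w : Fin t → Lit n) : Prop :=
  ∃ ht : 2 ≤ t,
    Function.Injective (fun j => (w j).1) ∧
    (∀ j : Fin t, ∀ hj : j.1 + 1 < t, ImpEdge F (w j) (w ⟨j.1 + 1, hj⟩)) ∧
    ∃ u v : Lit n,
      (∃ j, u = w j ∨ u = (w j).neg) ∧ (∃ j, v = w j ∨ v = (w j).neg) ∧
      ImpEdge F u (w ⟨0, by omega⟩) ∧ ImpEdge F (w ⟨t - 1, by omega⟩) v

/-- The assignment `σ` satisfies the 2-CNF formula `F` (a finite set of 2-clauses). -/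
def SatF {n : ℕ} (σ : Fin n → Bool) (F : Finset (Clause n 2)) : Prop :=
  ∀ c ∈ F, ∃ p ∈ c.1, σ p.1 = p.2

namespace NoBicycleAux

lemma neg_neg {n : ℕ} (w : Lit n) : w.neg.neg = w := by
  simp [Lit.neg]

lemma neg_ne {n : ℕ} (w : Lit n) : w.neg ≠ w := by
  rcases w with ⟨a, b⟩
  simp [Lit.neg]

lemma eq_or_eq_neg_of_fst_eq {n : ℕ} {y z : Lit n} (h : y.1 = z.1) :
    y = z ∨ y = z.neg := by
  rcases y with ⟨a, b⟩; rcases z with ⟨c, d⟩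
  cases b <;> cases d <;> simp_all [Lit.neg]

variable {n : ℕ} {F : Finset (Clause n 2)}

lemma edge_var_ne {a b : Lit n} (h : ImpEdge F a b) : a.1 ≠ b.1 := by
  obtain ⟨c, _, h1, h2, h3⟩ := h
  intro hv
  obtain ⟨hcard, himg⟩ := c.2
  have hinj : Set.InjOn Prod.fst (c.1 : Set (Lit n)) := by
    rw [← Finset.card_image_iff]; rw [himg, hcard]
  exact h3 (hinj h1 h2 (by simpa [Lit.neg] using hv))

lemma edge_skew {a b : Lit n} (h : ImpEdge F a b) : ImpEdge F b.neg a.neg := by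
  obtain ⟨c, hc, h1, h2, h3⟩ := h
  refine ⟨c, hc, ?_, h1, ?_⟩
  · rw [neg_neg]; exact h2
  · rw [neg_neg]; intro he; exact h3 he.symm

lemma rtg_skew {a b : Lit n} (h : Relation.ReflTransGen (ImpEdge F) a b) :
    Relation.ReflTransGen (ImpEdge F) b.neg a.neg := by
  induction h with
  | refl => exact Relation.ReflTransGen.refl
  | tail _ hbc ih => exact Relation.ReflTransGen.head (edge_skew hbc) ih

/-- Part 1: construction of a satisfying assignment assuming no contradictory literal. -/
lemma exists_assign
    (H : ∀ x : Lit n, ¬(Relation.ReflTransGen (ImpEdge F) x x.neg ∧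
      Relation.ReflTransGen (ImpEdge F) x.neg x)) :
    ∃ σ : Fin n → Bool, SatF σ F := by
  classical
  set R := Relation.ReflTransGen (ImpEdge F) with hR
  -- closed, consistent, covering set of literals
  have key : ∀ V : Finset (Fin n), ∃ S : Lit n → Prop,
      (∀ a b, S a → ImpEdge F a b → S b) ∧
      (∀ y, S y → ¬ S y.neg) ∧
      (∀ v ∈ V, S (v, true) ∨ S (v, false)) := by
    intro V
    induction V using Finset.induction_on with
    | empty => exact ⟨fun _ => False, by tauto, by tauto, by simp⟩
    | @insert x V hx ih =>
      obtain ⟨S, Sclosed, Scons, Scov⟩ := ih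
      have SclosedR : ∀ a b, S a → R a b → S b := by
        intro a b ha hab
        induction hab with
        | refl => exact ha
        | tail _ h ih2 => exact Sclosed _ _ ih2 h
      by_cases hcov : S (x, true) ∨ S (x, false)
      · refine ⟨S, Sclosed, Scons, ?_⟩
        intro v hv
        rcases Finset.mem_insert.mp hv with rfl | hv
        · exact hcov
        · exact Scov v hv
      · -- pick w on variable x with ¬ R w w.neg
        have hpick : ∃ w : Lit n, w.1 = x ∧ ¬ R w w.neg := by
          by_cases h1 : R (x, true) (x, false)
          · refine ⟨(x, false), rfl, ?_⟩
            intro h2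
            apply H (x, true)
            constructor
            · simpa [Lit.neg] using h1
            · simpa [Lit.neg] using h2
          · exact ⟨(x, true), rfl, fun h => h1 (by simpa [Lit.neg] using h)⟩
        obtain ⟨w, hwx, hw⟩ := hpick
        have hnotSvar : ∀ y : Lit n, y.1 = x → ¬ S y := by
          intro y hy hSy
          rcases y with ⟨a, b⟩
          cases hy
          cases b
          · exact hcov (Or.inr hSy)
          · exact hcov (Or.inl hSy)
        refine ⟨fun y => S y ∨ R w y, ?_, ?_, ?_⟩
        · rintro a b (ha | ha) hab
          · exact Or.inl (Sclosed a b ha hab)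
          · exact Or.inr (ha.tail hab)
        · rintro y (hy | hy) (hy' | hy')
          · exact Scons y hy hy'
          · -- S y, R w y.neg ⇒ R y w.neg ⇒ S w.neg, contra
            have := rtg_skew (F := F) hy'
            rw [neg_neg] at this
            exact hnotSvar w.neg (by simp [Lit.neg, hwx]) (SclosedR _ _ hy this)
          · have := rtg_skew (F := F) hy
            exact hnotSvar w.neg (by simp [Lit.neg, hwx]) (SclosedR _ _ hy' this)
          · have h1 := rtg_skew (F := F) hy'
            rw [neg_neg] at h1
            exact hw (hy.trans h1)
        · intro v hv
          rcases Finset.mem_insert.mp hv with rfl | hv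
          · rcases w with ⟨a, b⟩
            cases hwx
            cases b
            · exact Or.inr (Or.inr Relation.ReflTransGen.refl)
            · exact Or.inl (Or.inr Relation.ReflTransGen.refl)
          · rcases Scov v hv with h | h
            · exact Or.inl (Or.inl h)
            · exact Or.inr (Or.inl h)
  obtain ⟨S, Sclosed, Scons, Scov⟩ := key Finset.univ
  refine ⟨fun v => if S (v, true) then true else false, ?_⟩
  have hmatch : ∀ y : Lit n, S y → ¬ S y.neg := Scons
  intro c hc
  by_contra hno
  push_neg at hno
  -- get the two distinct literals of c
  obtain ⟨hcard, himg⟩ := c.2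
  obtain ⟨p, q, hpq, hc2⟩ := Finset.card_eq_two.mp hcard
  have hp : p ∈ c.1 := by rw [hc2]; simp
  have hq : q ∈ c.1 := by rw [hc2]; simp
  -- σ makes both false, so S p.neg and S q.neg
  have hSneg : ∀ y ∈ c.1, S y.neg := by
    intro y hy
    have h1 := hno y hy
    rcases Scov y.1 (Finset.mem_univ _) with h | h
    · have hy2 : y.2 = false := by
        cases hb : y.2
        · rfl
        · exact absurd (by simp [h, hb]) h1
      have hne : y.neg = (y.1, true) := by
        rcases y with ⟨a, b⟩; simp_all [Lit.neg]
      rw [hne]; exact h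
    · have hnt : ¬ S (y.1, true) := fun ht => Scons _ ht (by simpa [Lit.neg] using h)
      have hy2 : y.2 = true := by
        cases hb : y.2
        · exact absurd (by simp [hnt, hb]) h1
        · rfl
      have hne : y.neg = (y.1, false) := by
        rcases y with ⟨a, b⟩; simp_all [Lit.neg]
      rw [hne]; exact h
  -- edge p.neg → q via clause c
  have hedge : ImpEdge F p.neg q := by
    refine ⟨c, hc, ?_, hq, ?_⟩
    · rw [neg_neg]; exact hp
    · rw [neg_neg]; exact hpq
  exact Scons q.neg (hSneg q hq) (by rw [neg_neg]; exact Sclosed _ _ (hSneg p hp) hedge)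


/-- Part 2a: from a nontrivial periodic closed walk, extract a bicycle. -/
lemma bicycle_of_cycle {M : ℕ} (hM : 2 ≤ M) (p : ℕ → Lit n)
    (hper : ∀ k, p (k + M) = p k)
    (hedge : ∀ k, ImpEdge F (p k) (p (k + 1))) :
    ∃ t, ∃ w : Fin t → Lit n, IsBicycle F w := by
  classical
  set good : ℕ → ℕ → Prop :=
    fun i ℓ => ∀ j1 j2, j1 < ℓ → j2 < ℓ → (p (i + j1)).1 = (p (i + j2)).1 → j1 = j2
    with hgood
  have hbound : ∀ i ℓ, good i ℓ → ℓ ≤ M := by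
    intro i ℓ hg
    by_contra hlt
    push_neg at hlt
    have := hg 0 M (by omega) (by omega) (by rw [Nat.add_zero, hper i])
    omega
  set t : ℕ := Nat.findGreatest (fun ℓ => ∃ i, good i ℓ) M with ht
  have hgood02 : good 0 2 := by
    intro j1 j2 hj1 hj2 hv
    have h01 : (p 0).1 ≠ (p 1).1 := edge_var_ne (hedge 0)
    interval_cases j1 <;> interval_cases j2 <;> simp_all
  have ht2 : 2 ≤ t := Nat.le_findGreatest hM ⟨0, hgood02⟩
  have htM : t ≤ M := Nat.findGreatest_le M
  obtain ⟨i, hgi⟩ : ∃ i, good i t :=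
    Nat.findGreatest_spec (P := fun ℓ => ∃ i, good i ℓ) (m := 2) hM ⟨0, hgood02⟩
  have hmax : ∀ i', ¬ good i' (t + 1) := by
    intro i' hg
    by_cases hle : t + 1 ≤ M
    · exact Nat.findGreatest_is_greatest (P := fun ℓ => ∃ i, good i ℓ)
        (by omega) hle ⟨i', hg⟩
    · have := hbound i' (t + 1) hg; omega
  refine ⟨t, fun j => p (i + j), ?_⟩
  refine ⟨ht2, ?_, ?_, ?_⟩
  · intro j1 j2 hv
    exact Fin.ext (hgi j1 j2 j1.2 j2.2 hv)
  · intro j hj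
    have := hedge (i + j)
    simpa [Nat.add_assoc] using this
  · -- find v
    have hnv : ¬ ∀ j1 j2, j1 < t + 1 → j2 < t + 1 →
        (p (i + j1)).1 = (p (i + j2)).1 → j1 = j2 := hmax i
    push_neg at hnv
    obtain ⟨j1, j2, hj1, hj2, hveq, hjne⟩ := hnv
    -- one of j1 j2 equals t
    have hv' : ∃ j < t, (p (i + t)).1 = (p (i + j)).1 := by
      rcases Nat.lt_or_ge j1 t with h1 | h1
      · rcases Nat.lt_or_ge j2 t with h2 | h2
        · exact absurd (hgi j1 j2 h1 h2 hveq) hjne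
        · have : j2 = t := by omega
          exact ⟨j1, h1, by rw [← this]; exact hveq.symm⟩
      · have : j1 = t := by omega
        rcases Nat.lt_or_ge j2 t with h2 | h2
        · exact ⟨j2, h2, by rw [← this]; exact hveq⟩
        · omega
    obtain ⟨jv, hjv, hveq'⟩ := hv'
    -- find u
    have hnu : ¬ ∀ j1 j2, j1 < t + 1 → j2 < t + 1 →
        (p (i + (M - 1) + j1)).1 = (p (i + (M - 1) + j2)).1 → j1 = j2 := hmax (i + (M - 1))
    push_neg at hnu
    obtain ⟨k1, k2, hk1, hk2, hueq, hkne⟩ := hnu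
    have hshift : ∀ k, 1 ≤ k → k ≤ t → p (i + (M - 1) + k) = p (i + (k - 1)) := by
      intro k h1k hkt
      have : i + (M - 1) + k = i + (k - 1) + M := by omega
      rw [this, hper]
    have hu' : ∃ j < t, (p (i + (M - 1))).1 = (p (i + j)).1 := by
      rcases Nat.eq_zero_or_pos k1 with rfl | hk1p
      · -- k1 = 0
        have hk2p : 1 ≤ k2 := by omega
        refine ⟨k2 - 1, by omega, ?_⟩
        rw [← hshift k2 hk2p (by omega)]
        simpa using hueq
      · rcases Nat.eq_zero_or_pos k2 with rfl | hk2p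
        · refine ⟨k1 - 1, by omega, ?_⟩
          rw [← hshift k1 hk1p (by omega)]
          simpa using hueq.symm
        · exfalso
          rw [hshift k1 hk1p (by omega), hshift k2 hk2p (by omega)] at hueq
          have := hgi (k1 - 1) (k2 - 1) (by omega) (by omega) hueq
          omega
    obtain ⟨ju, hju, hueq'⟩ := hu'
    refine ⟨p (i + (M - 1)), p (i + t), ⟨⟨ju, hju⟩, ?_⟩, ⟨⟨jv, hjv⟩, ?_⟩, ?_, ?_⟩
    · exact eq_or_eq_neg_of_fst_eq hueq'
    · exact eq_or_eq_neg_of_fst_eq hveq'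
    · -- edge u → w 0
      have := hedge (i + (M - 1))
      have heq : i + (M - 1) + 1 = i + M := by omega
      rw [heq, hper] at this
      simpa using this
    · -- edge w (t-1) → v
      have := hedge (i + (t - 1))
      have heq : i + (t - 1) + 1 = i + t := by omega
      rw [heq] at this
      simpa using this

lemma chain_glue {α : Type*} {r : α → α → Prop} :
    ∀ {a : α} {l1 l2 : List α}, List.Chain r a l1 →
      List.Chain r (List.getLast (a :: l1) (List.cons_ne_nil a l1)) l2 →
      List.Chain r a (l1 ++ l2)
  | _, [], _ => fun _ h2 => h2
  | a, b :: l1, l2 => fun h1 h2 => by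
      unfold List.Chain at h1; rw [List.chain_cons] at h1
      exact List.Chain.cons h1.1 (chain_glue h1.2 (by rwa [List.getLast_cons_cons] at h2))

/-- Part 2b: no literal has paths to its negation and back. -/
lemma no_contra (hb : ∀ (t : ℕ) (w : Fin t → Lit n), ¬ IsBicycle F w) :
    ∀ x : Lit n, ¬(Relation.ReflTransGen (ImpEdge F) x x.neg ∧
      Relation.ReflTransGen (ImpEdge F) x.neg x) := by
  rintro x ⟨h1, h2⟩
  obtain ⟨l1, hc1, hl1⟩ := List.exists_isChain_cons_of_relationReflTransGen h1
  obtain ⟨l2, hc2, hl2⟩ := List.exists_isChain_cons_of_relationReflTransGen h2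
  have hl1ne : l1 ≠ [] := by
    rintro rfl
    simp only [List.getLast_singleton] at hl1
    exact neg_ne x hl1.symm
  have hl2ne : l2 ≠ [] := by
    rintro rfl
    simp only [List.getLast_singleton] at hl2
    exact neg_ne x hl2
  set L : List (Lit n) := x :: (l1 ++ l2) with hL
  set M : ℕ := l1.length + l2.length with hM'
  have hM : 2 ≤ M := by
    have := List.length_pos_iff.mpr hl1ne
    have := List.length_pos_iff.mpr hl2ne
    omega
  have hMpos : 0 < M := by omega
  have hlen : L.length = M + 1 := by simp [hL, hM']
  have hchain : List.Chain (ImpEdge F) x (l1 ++ l2) := by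
    apply chain_glue hc1
    rw [hl1]
    exact hc2
  have hchain' : List.Chain' (ImpEdge F) L := hchain
  have happne : l1 ++ l2 ≠ [] := by simp [hl1ne]
  have hlast2 : l2.getLast hl2ne = x := by
    rw [List.getLast_cons hl2ne] at hl2
    exact hl2
  have hlast : L.getLast (by simp [hL]) = x := by
    simp only [hL]
    rw [List.getLast_cons happne, List.getLast_append_of_ne_nil _ hl2ne]
    exact hlast2
  have hgetM : L.getD M x = x := by
    rw [List.getD_eq_getElem (hn := by omega)]
    have hg := List.getLast_eq_getElem (l := L) (by simp [hL])
    rw [hg] at hlast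
    simpa [hlen, List.get_eq_getElem] using hlast
  have hget0 : L.getD 0 x = x := rfl
  -- the periodic walk
  set p : ℕ → Lit n := fun k => L.getD (k % M) x with hp
  have hper : ∀ k, p (k + M) = p k := by
    intro k
    simp [hp, Nat.add_mod_right]
  have hstep : ∀ i, i < M → ImpEdge F (L.getD i x) (L.getD (i + 1) x) := by
    intro i hi
    rw [List.getD_eq_getElem (hn := by omega), List.getD_eq_getElem (hn := by omega)]
    exact List.isChain_iff_getElem.mp hchain' i (by omega)
  have hedge : ∀ k, ImpEdge F (p k) (p (k + 1)) := by
    intro k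
    have hi : k % M < M := Nat.mod_lt _ hMpos
    have hmod : (k + 1) % M = (k % M + 1) % M := (Nat.mod_add_mod k M 1).symm
    rcases Nat.lt_or_ge (k % M + 1) M with h | h
    · have h2 : (k + 1) % M = k % M + 1 := by rw [hmod, Nat.mod_eq_of_lt h]
      show ImpEdge F (L.getD (k % M) x) (L.getD ((k + 1) % M) x)
      rw [h2]
      exact hstep _ hi
    · have heq : k % M + 1 = M := by omega
      have h0 : (k + 1) % M = 0 := by rw [hmod, heq, Nat.mod_self]
      show ImpEdge F (L.getD (k % M) x) (L.getD ((k + 1) % M) x)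
      rw [h0]
      have hs := hstep (k % M) hi
      rw [heq, hgetM] at hs
      exact hs
  obtain ⟨t, w, hw⟩ := bicycle_of_cycle hM p hper hedge
  exact hb t w hw

end NoBicycleAux

/-- If a 2-CNF formula `F` contains no bicycle (of any length) in its implication graph,
then `F` is satisfiable. -/
theorem satisfiable_of_no_bicycle {n : ℕ} (F : Finset (Clause n 2))
    (h : ∀ (t : ℕ) (w : Fin t → Lit n), ¬ IsBicycle F w) :
    ∃ σ : Fin n → Bool, SatF σ F := by
  exact NoBicycleAux.exists_assign (NoBicycleAux.no_contra h)
end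

section
/- Let F be a 2-CNF formula and suppose w_1 → w_2 → ⋯ → w_L is a directed path in the implication graph of F, each edge arising from a distinct clause of F, and let i be the number of indices 1 ≤ j ≤ L−1 at which the sign of w_{j+1} differs from the sign of w_j (a literal's sign is positive if it is an unnegated variable, negative otherwise). Then exactly L−1−i of the L−1 clauses giving the edges of the path have exactly one positive literal, the other i clauses each have two positive or zero positive literals, and at least ⌊i/2⌋ of those i clauses have zero positive literals. -/
open Finset

lemma posCount_edge {n : ℕ} (C : Clause n 2) (a b : Lit n) (h : EdgeFrom C a b) :
    C.posCount = (if a.2 then 0 else 1) + (if b.2 then 1 else 0) := by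
  obtain ⟨ha, hb, hne⟩ := h
  have hC : C.1 = {a.neg, b} := by
    refine (Finset.eq_of_subset_of_card_le ?_ ?_).symm
    · intro x hx
      simp only [Finset.mem_insert, Finset.mem_singleton] at hx
      rcases hx with h | h <;> simp [h, ha, hb]
    · rw [C.2.1, Finset.card_insert_of_notMem (by simpa using hne),
        Finset.card_singleton]
  unfold Clause.posCount
  rw [hC, Finset.filter_insert, Finset.filter_singleton]
  rcases a with ⟨av, as⟩; rcases b with ⟨bv, bs⟩
  have hne' : (⟨av, !as⟩ : Lit n) ≠ (bv, bs) := hne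
  cases as <;> cases bs <;>
    simp_all [Lit.neg, Finset.card_insert_of_notMem]

-- alternation bound
lemma up_le_down {s : ℕ → Bool} : ∀ m : ℕ,
    ((Finset.range m).filter fun j => s j = false ∧ s (j+1) = true).card ≤
    ((Finset.range m).filter fun j => s j = true ∧ s (j+1) = false).card +
      (if s m then 1 else 0) := by
  intro m
  induction m with
  | zero => simp
  | succ m ih =>
    rw [Finset.range_add_one, Finset.filter_insert, Finset.filter_insert]
    rcases hm : s m <;> rcases hm1 : s (m+1) <;>
      simp_all [Finset.card_insert_of_notMem]


/-- Suppose `w 0 → w 1 → ⋯ → w (L-1)` is a directed path in the implication graph of the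
2-CNF formula `F`, the edge `w j → w (j+1)` arising from the clause `c j ∈ F`, the clauses
`c 0, …, c (L-2)` being pairwise distinct.  Let `i` be the number of indices
`j ≤ L - 2` at which the sign of `w (j+1)` differs from the sign of `w j`.  Then exactly
`L - 1 - i` of the `L - 1` clauses of the path have exactly one positive literal, the other
`i` clauses each have two or zero positive literals, and at least `⌊i/2⌋` of those `i`
clauses have zero positive literals. -/
theorem path_sign_change_clause_count {n L : ℕ} (F : Finset (Clause n 2))
    (w : ℕ → Lit n) (c : ℕ → Clause n 2)
    (hmem : ∀ j < L - 1, c j ∈ F)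
    (hdist : Set.InjOn c (Set.Iio (L - 1)))
    (hedge : ∀ j < L - 1, EdgeFrom (c j) (w j) (w (j + 1)))
    (i : ℕ)
    (hi : i = ((Finset.range (L - 1)).filter fun j => (w (j + 1)).2 ≠ (w j).2).card) :
    ((Finset.range (L - 1)).filter fun j => (c j).posCount = 1).card = L - 1 - i ∧
    (∀ j < L - 1, (c j).posCount ≠ 1 → (c j).posCount = 0 ∨ (c j).posCount = 2) ∧
    i / 2 ≤ ((Finset.range (L - 1)).filter fun j => (c j).posCount = 0).card := by
  have hpc : ∀ j < L - 1, (c j).posCount =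
      (if (w j).2 then 0 else 1) + (if (w (j + 1)).2 then 1 else 0) :=
    fun j hj => posCount_edge _ _ _ (hedge j hj)
  refine ⟨?_, ?_, ?_⟩
  · have h1 : ((Finset.range (L - 1)).filter fun j => (c j).posCount = 1) =
        ((Finset.range (L - 1)).filter fun j => ¬ ((w (j + 1)).2 ≠ (w j).2)) := by
      apply Finset.filter_congr
      intro j hj
      rw [Finset.mem_range] at hj
      rw [hpc j hj]
      cases (w j).2 <;> cases (w (j + 1)).2 <;> simp
    have hsplit := Finset.card_filter_add_card_filter_not
      (s := Finset.range (L - 1)) (p := fun j => (w (j + 1)).2 ≠ (w j).2)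
    rw [Finset.card_range] at hsplit
    rw [h1]
    omega
  · intro j hj hne
    rw [hpc j hj] at hne ⊢
    rcases h1 : (w j).2 <;> rcases h2 : (w (j + 1)).2 <;> simp [h1, h2] at hne ⊢
  · have h0 : ((Finset.range (L - 1)).filter fun j => (c j).posCount = 0) =
        ((Finset.range (L - 1)).filter fun j => (w j).2 = true ∧ (w (j + 1)).2 = false) := by
      apply Finset.filter_congr
      intro j hj
      rw [Finset.mem_range] at hj
      rw [hpc j hj]
      cases (w j).2 <;> cases (w (j + 1)).2 <;> simp
    have hiu : ((Finset.range (L - 1)).filter fun j => (w (j + 1)).2 ≠ (w j).2) =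
        ((Finset.range (L - 1)).filter fun j => (w j).2 = false ∧ (w (j + 1)).2 = true) ∪
        ((Finset.range (L - 1)).filter fun j => (w j).2 = true ∧ (w (j + 1)).2 = false) := by
      rw [← Finset.filter_or]
      apply Finset.filter_congr
      intro j _
      cases (w j).2 <;> cases (w (j + 1)).2 <;> simp
    have hdisj : Disjoint
        ((Finset.range (L - 1)).filter fun j => (w j).2 = false ∧ (w (j + 1)).2 = true)
        ((Finset.range (L - 1)).filter fun j => (w j).2 = true ∧ (w (j + 1)).2 = false) := by
      rw [Finset.disjoint_left]
      intro a ha hb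
      simp only [Finset.mem_filter] at ha hb
      simp_all
    have hub := up_le_down (s := fun j => (w j).2) (L - 1)
    rw [hiu, Finset.card_union_of_disjoint hdisj] at hi
    rw [h0]
    split at hub <;> omega
end

section
/- Consider the random 2-CNF formula F̄ on n variables in which each of the C(n,2) clauses with two positive literals is present independently with probability q_2 = 2p_2 r/n, each of the n(n−1) clauses with one positive and one negative literal is present independently with probability q_1 = p_1 r/n, and each of the C(n,2) clauses with two negative literals is present independently with probability q_0 = 2p_0 r/n, where r > 0 and p_0, p_1, p_2 > 0 with p_0 ≤ p_2. Let Y_L denote the number of sequences of L literals on L distinct variables forming a directed path in the implication graph of F̄. Then E[Y_L] ≤ 2n·√(p_2/p_0)·( r·(p_1 + 2√(p_0 p_2)) )^{L−1}. -/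
open Finset

/-- The inclusion probability of a 2-clause: `q2` for a clause with two positive literals,
`q1` for a clause with one positive and one negative literal, and `q0` for a clause with
two negative literals. -/
noncomputable def clauseProb {n : ℕ} (q0 q1 q2 : ℝ) (c : Clause n 2) : ℝ :=
  if c.posCount = 2 then q2 else if c.posCount = 1 then q1 else q0

/-- The probability, under independent inclusion of each 2-clause `c` with probability
`clauseProb q0 q1 q2 c`, that the resulting random 2-CNF formula is exactly `F`. -/
noncomputable def formulaWeight {n : ℕ} (q0 q1 q2 : ℝ) (F : Finset (Clause n 2)) : ℝ :=
  (∏ c ∈ F, clauseProb q0 q1 q2 c) * ∏ c ∈ Fᶜ, (1 - clauseProb q0 q1 q2 c)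

/-- The number of sequences of `L` literals on `L` distinct variables forming a directed
path in the implication graph of `F`. -/
noncomputable def pathCount (n L : ℕ) (F : Finset (Clause n 2)) : ℕ :=
  Nat.card {w : Fin L → Lit n //
    Function.Injective (fun j => (w j).1) ∧
    ∀ j : Fin L, ∀ hj : j.1 + 1 < L, ImpEdge F (w j) (w ⟨j.1 + 1, hj⟩)}

section Aux

/-! ### Auxiliary lemmas -/

lemma sum_weight_indicator {α : Type*} [Fintype α] [DecidableEq α] (p : α → ℝ) (S : Finset α) :
    ∑ F : Finset α, (if S ⊆ F then (∏ c ∈ F, p c) * ∏ c ∈ Fᶜ, (1 - p c) else 0)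
      = ∏ c ∈ S, p c := by
  classical
  rw [← Finset.sum_filter]
  have himg : (univ : Finset (Finset α)).filter (fun F => S ⊆ F)
      = Sᶜ.powerset.image (fun T => S ∪ T) := by
    ext F
    simp only [mem_filter, mem_univ, true_and, mem_image, mem_powerset]
    constructor
    · intro h
      refine ⟨F \ S, fun a ha => mem_compl.mpr (mem_sdiff.mp ha).2, ?_⟩
      rw [Finset.union_sdiff_of_subset h]
    · rintro ⟨T, hT, rfl⟩
      exact Finset.subset_union_left
  rw [himg, Finset.sum_image]
  · have hstep : ∀ T ∈ Sᶜ.powerset,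
        (∏ c ∈ S ∪ T, p c) * ∏ c ∈ (S ∪ T)ᶜ, (1 - p c)
          = (∏ c ∈ S, p c) * ((∏ c ∈ T, p c) * ∏ c ∈ Sᶜ \ T, (1 - p c)) := by
      intro T hT
      rw [mem_powerset] at hT
      have hdisj : Disjoint S T := by
        rw [Finset.disjoint_left]
        intro a ha hb
        exact (Finset.mem_compl.mp (hT hb)) ha
      have hc : (S ∪ T)ᶜ = Sᶜ \ T := by
        ext a; simp only [mem_compl, mem_union, mem_sdiff]; tauto
      rw [Finset.prod_union hdisj, hc]
      ring
    rw [Finset.sum_congr rfl hstep, ← Finset.mul_sum]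
    have h1 : ∑ T ∈ Sᶜ.powerset, (∏ c ∈ T, p c) * ∏ c ∈ Sᶜ \ T, (1 - p c)
        = ∏ c ∈ Sᶜ, (p c + (1 - p c)) := (Finset.prod_add _ _ _).symm
    rw [h1]
    simp
  · intro T hT T' hT' h
    have hT2 : T ⊆ Sᶜ := by exact Finset.mem_powerset.mp (Finset.mem_coe.mp hT)
    have hT2' : T' ⊆ Sᶜ := by exact Finset.mem_powerset.mp (Finset.mem_coe.mp hT')
    have key : ∀ U ⊆ Sᶜ, (S ∪ U) \ S = U := fun U hU => by
      rw [Finset.union_sdiff_cancel_left]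
      rw [Finset.disjoint_left]; intro a ha hb; exact (Finset.mem_compl.mp (hU hb)) ha
    rw [← key T hT2, ← key T' hT2', show S ∪ T = S ∪ T' from h]

noncomputable def Wseq (q : Bool → Bool → ℝ) (M : ℕ) (s : Fin (M+1) → Bool) : ℝ :=
  ∏ j : Fin M, q (s j.castSucc) (s j.succ)

noncomputable def Hfun (q : Bool → Bool → ℝ) : ℕ → Bool → ℝ
  | 0, _ => 1
  | (M+1), a => ∑ b, q a b * Hfun q M b

lemma Wseq_cons (q : Bool → Bool → ℝ) (M : ℕ) (a : Bool) (t : Fin (M+1) → Bool) :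
    Wseq q (M+1) (Fin.cons a t) = q a (t 0) * Wseq q M t := by
  unfold Wseq
  rw [Fin.prod_univ_succ]
  simp only [Fin.castSucc_zero, Fin.cons_zero, ← Fin.succ_castSucc, Fin.cons_succ]

lemma sum_Wseq (q : Bool → Bool → ℝ) (M : ℕ) (φ : Bool → ℝ) :
    ∑ s : Fin (M+1) → Bool, φ (s 0) * Wseq q M s = ∑ a, φ a * Hfun q M a := by
  induction M generalizing φ with
  | zero =>
      rw [← Equiv.sum_comp (Equiv.funUnique (Fin 1) Bool).symm
        (fun s => φ (s 0) * Wseq q 0 s)]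
      simp [Wseq, Hfun, Equiv.funUnique]
  | succ M ih =>
      rw [← Equiv.sum_comp (Fin.consEquiv fun _ => Bool)
        (fun s => φ (s 0) * Wseq q (M+1) s), Fintype.sum_prod_type]
      have key : ∀ a : Bool,
          (∑ t : Fin (M+1) → Bool,
            φ ((Fin.consEquiv fun _ => Bool) (a, t) 0) *
              Wseq q (M+1) ((Fin.consEquiv fun _ => Bool) (a, t)))
          = φ a * Hfun q (M+1) a := by
        intro a
        have h2 : ∀ t : Fin (M+1) → Bool,
            φ ((Fin.consEquiv fun _ => Bool) (a, t) 0) *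
              Wseq q (M+1) ((Fin.consEquiv fun _ => Bool) (a, t))
            = (fun b => φ a * q a b) (t 0) * Wseq q M t := by
          intro t
          have he : (Fin.consEquiv fun _ => Bool) (a, t) = Fin.cons a t := rfl
          rw [he, Fin.cons_zero, Wseq_cons]
          ring
        rw [Finset.sum_congr rfl (fun t _ => h2 t), ih (fun b => φ a * q a b)]
        show _ = φ a * ∑ b, q a b * Hfun q M b
        rw [Finset.mul_sum]
        exact Finset.sum_congr rfl (fun b _ => by ring)
      exact Finset.sum_congr rfl (fun a _ => key a)

lemma Hfun_le (q : Bool → Bool → ℝ) (lam : ℝ) (e : Bool → ℝ)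
    (hq : ∀ a b, 0 ≤ q a b) (hlam : 0 ≤ lam) (he1 : ∀ a, 1 ≤ e a)
    (htr : ∀ a, ∑ b, q a b * e b ≤ lam * e a) :
    ∀ M a, Hfun q M a ≤ lam ^ M * e a := by
  intro M
  induction M with
  | zero => intro a; simpa [Hfun] using he1 a
  | succ M ih =>
      intro a
      calc Hfun q (M+1) a = ∑ b, q a b * Hfun q M b := rfl
        _ ≤ ∑ b, q a b * (lam ^ M * e b) :=
            Finset.sum_le_sum fun b _ => mul_le_mul_of_nonneg_left (ih b) (hq a b)
        _ = lam ^ M * ∑ b, q a b * e b := by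
            rw [Finset.mul_sum]
            exact Finset.sum_congr rfl fun b _ => by ring
        _ ≤ lam ^ M * (lam * e a) :=
            mul_le_mul_of_nonneg_left (htr a) (pow_nonneg hlam M)
        _ = lam ^ (M+1) * e a := by ring

def clauseOf {n : ℕ} (a b : Lit n) (h : a.1 ≠ b.1) : Clause n 2 := by
  refine ⟨{a.neg, b}, ?_, ?_⟩
  · rw [Finset.card_insert_of_notMem, Finset.card_singleton]
    simp only [Finset.mem_singleton]
    intro hc; exact h (by rw [← hc]; rfl)
  · rw [Finset.image_insert, Finset.image_singleton]
    show ({a.1, b.1} : Finset (Fin n)).card = 2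
    rw [Finset.card_insert_of_notMem (by simpa using h), Finset.card_singleton]

lemma impEdge_iff {n : ℕ} (F : Finset (Clause n 2)) (a b : Lit n) (h : a.1 ≠ b.1) :
    ImpEdge F a b ↔ clauseOf a b h ∈ F := by
  constructor
  · rintro ⟨c, hc, hna, hb, hne⟩
    have hsub : ({a.neg, b} : Finset (Lit n)) ⊆ c.1 := by
      intro x hx
      rcases Finset.mem_insert.mp hx with rfl | hx
      · exact hna
      · exact Finset.mem_singleton.mp hx ▸ hb
    have hcard : ({a.neg, b} : Finset (Lit n)).card = 2 := (clauseOf a b h).2.1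
    have h1 : c.1 = {a.neg, b} :=
      (Finset.eq_of_subset_of_card_le hsub (by rw [hcard, c.2.1])).symm
    have h2 : c = clauseOf a b h := Subtype.ext h1
    rwa [← h2]
  · intro hF
    refine ⟨clauseOf a b h, hF, Finset.mem_insert_self _ _,
      Finset.mem_insert_of_mem (Finset.mem_singleton_self _), ?_⟩
    intro hc; exact h (by rw [← hc]; rfl)

noncomputable def qval (q0 q1 q2 : ℝ) (sa sb : Bool) : ℝ :=
  if sa then (if sb then q1 else q0) else (if sb then q2 else q1)

lemma clauseProb_clauseOf {n : ℕ} (q0 q1 q2 : ℝ) (a b : Lit n) (h : a.1 ≠ b.1) :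
    clauseProb q0 q1 q2 (clauseOf a b h) = qval q0 q1 q2 a.2 b.2 := by
  have hne : a.neg ≠ b := fun hc => h (by rw [← hc]; rfl)
  have hpos : (clauseOf a b h).posCount
      = (if a.neg.2 then 1 else 0) + (if b.2 then 1 else 0) := by
    show (({a.neg, b} : Finset (Lit n)).filter fun p => p.2 = true).card = _
    rw [Finset.filter_insert, Finset.filter_singleton]
    by_cases h1 : a.neg.2 = true <;> by_cases h2 : b.2 = true <;>
      simp [h1, h2, Finset.card_insert_of_notMem, hne]
  unfold clauseProb qval
  have hnegsnd : a.neg.2 = !a.2 := rfl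
  rcases Bool.dichotomy a.2 with ha | ha <;> rcases Bool.dichotomy b.2 with hb | hb <;>
    simp [hpos, hnegsnd, ha, hb]

section PathClause
variable {n M : ℕ} (w : Fin (M+1) → Lit n)

lemma hne_of_inj (hinj : Function.Injective (fun j => (w j).1)) (j : Fin M) :
    (w j.castSucc).1 ≠ (w j.succ).1 := by
  intro h
  have h0 := hinj h
  have h1 : (j.castSucc : ℕ) = (j.succ : ℕ) := congrArg Fin.val h0
  simp at h1

lemma path_iff (F : Finset (Clause n 2))
    (hne : ∀ j : Fin M, (w j.castSucc).1 ≠ (w j.succ).1) :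
    (∀ j : Fin (M+1), ∀ hj : j.1 + 1 < M+1, ImpEdge F (w j) (w ⟨j.1 + 1, hj⟩)) ↔
    (∀ j : Fin M, clauseOf (w j.castSucc) (w j.succ) (hne j) ∈ F) := by
  constructor
  · intro h j
    rw [← impEdge_iff]
    have hj : (j.castSucc : ℕ) + 1 < M + 1 := by
      have := j.2; simp only [Fin.coe_castSucc]; omega
    exact h j.castSucc hj
  · intro h j hj
    have hj' : j.1 < M := by omega
    have h1 : (⟨j.1, hj'⟩ : Fin M).castSucc = j := by ext; simp
    have h2 : (⟨j.1, hj'⟩ : Fin M).succ = ⟨j.1 + 1, hj⟩ := by ext; simp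
    have h3 := (impEdge_iff F _ _ (hne ⟨j.1, hj'⟩)).mpr (h ⟨j.1, hj'⟩)
    rwa [h1, h2] at h3

lemma clauseOf_inj (hinj : Function.Injective (fun j => (w j).1))
    (hne : ∀ j : Fin M, (w j.castSucc).1 ≠ (w j.succ).1) :
    Function.Injective (fun j : Fin M =>
      clauseOf (w j.castSucc) (w j.succ) (hne j)) := by
  intro j k h
  have hset : ({(w j.castSucc).neg, w j.succ} : Finset (Lit n))
      = {(w k.castSucc).neg, w k.succ} := congrArg Subtype.val h
  have hvar : ∀ a b : Fin (M+1), (w a).1 = (w b).1 → a = b := fun a b hab => hinj hab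
  have hm1 : w j.succ ∈ ({(w k.castSucc).neg, w k.succ} : Finset (Lit n)) := by
    rw [← hset]; exact Finset.mem_insert_of_mem (Finset.mem_singleton_self _)
  have hm2 : (w j.castSucc).neg ∈ ({(w k.castSucc).neg, w k.succ} : Finset (Lit n)) := by
    rw [← hset]; exact Finset.mem_insert_self _ _
  rcases Finset.mem_insert.mp hm1 with h1 | h1
  · have e1 : (w j.succ).1 = (w k.castSucc).1 := by
      have := congrArg Prod.fst h1; simpa [Lit.neg] using this
    have e1' : j.succ = k.castSucc := hvar _ _ e1
    rcases Finset.mem_insert.mp hm2 with h2 | h2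
    · have e2 : (w j.castSucc).1 = (w k.castSucc).1 := by
        have := congrArg Prod.fst h2; simpa [Lit.neg] using this
      have e2' : j.castSucc = k.castSucc := hvar _ _ e2
      have c1 : (j.1 : ℕ) + 1 = k.1 := by
        have := congrArg Fin.val e1'; simpa using this
      have c2 : (j.1 : ℕ) = k.1 := by
        have := congrArg Fin.val e2'; simpa using this
      omega
    · have h2' := Finset.mem_singleton.mp h2
      have e2 : (w j.castSucc).1 = (w k.succ).1 := by
        have := congrArg Prod.fst h2'; simpa [Lit.neg] using this
      have e2' : j.castSucc = k.succ := hvar _ _ e2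
      have c1 : (j.1 : ℕ) + 1 = k.1 := by
        have := congrArg Fin.val e1'; simpa using this
      have c2 : (j.1 : ℕ) = k.1 + 1 := by
        have := congrArg Fin.val e2'; simpa using this
      omega
  · have h1' := Finset.mem_singleton.mp h1
    have e1 : (w j.succ).1 = (w k.succ).1 := by
      have := congrArg Prod.fst h1'; simpa [Lit.neg] using this
    have e1' : j.succ = k.succ := hvar _ _ e1
    exact Fin.succ_injective _ e1'

end PathClause

end Aux


set_option maxHeartbeats 1600000 in
/-- In the random 2-CNF formula on `n` variables where each clause with two positive
literals is present independently with probability `q2 = 2 p2 r / n`, each clause with one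
positive literal with probability `q1 = p1 r / n`, and each clause with two negative
literals with probability `q0 = 2 p0 r / n`, the expected number `E[Y_L]` of directed paths
of `L` literals on distinct variables in the implication graph satisfies
`E[Y_L] ≤ 2 n √(p2/p0) (r (p1 + 2 √(p0 p2)))^(L-1)`. -/
theorem expected_path_count_le (n L : ℕ) (hn : 0 < n) (p0 p1 p2 r : ℝ)
    (hp0 : 0 < p0) (hp1 : 0 < p1) (hp2 : 0 < p2) (hp02 : p0 ≤ p2) (hr : 0 < r)
    (hq0 : 2 * p0 * r / n ≤ 1) (hq1 : p1 * r / n ≤ 1) (hq2 : 2 * p2 * r / n ≤ 1) :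
    ∑ F : Finset (Clause n 2),
        formulaWeight (2 * p0 * r / n) (p1 * r / n) (2 * p2 * r / n) F * (pathCount n L F : ℝ)
      ≤ 2 * n * Real.sqrt (p2 / p0) * (r * (p1 + 2 * Real.sqrt (p0 * p2))) ^ (L - 1) := by

  classical
  set q0v : ℝ := 2 * p0 * r / n with hq0v
  set q1v : ℝ := p1 * r / n with hq1v
  set q2v : ℝ := 2 * p2 * r / n with hq2v
  have hn' : (0:ℝ) < n := by exact_mod_cast hn
  have hn1 : (1:ℝ) ≤ n := by exact_mod_cast hn
  have hnne : (n:ℝ) ≠ 0 := ne_of_gt hn'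
  have h0v : 0 < q0v := by rw [hq0v]; positivity
  have h1v : 0 < q1v := by rw [hq1v]; positivity
  have h2v : 0 < q2v := by rw [hq2v]; positivity
  have hqnn : ∀ a b, 0 ≤ qval q0v q1v q2v a b := by
    intro a b; unfold qval
    rcases a <;> rcases b <;> simp <;> positivity
  set lam : ℝ := q1v + Real.sqrt (q0v * q2v) with hlam_def
  have hlam : 0 ≤ lam := by rw [hlam_def]; positivity
  have hs1le : (1:ℝ) ≤ p2 / p0 := (one_le_div hp0).mpr hp02
  have hsge1 : (1:ℝ) ≤ Real.sqrt (p2 / p0) := by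
    calc (1:ℝ) = Real.sqrt 1 := Real.sqrt_one.symm
      _ ≤ Real.sqrt (p2 / p0) := Real.sqrt_le_sqrt hs1le
  have hs2 : Real.sqrt (q0v * q2v) = 2 * r / n * Real.sqrt (p0 * p2) := by
    rw [show q0v * q2v = (2 * r / n) ^ 2 * (p0 * p2) by
      rw [hq0v, hq2v]; field_simp]
    rw [Real.sqrt_mul (by positivity), Real.sqrt_sq (by positivity)]
  have key1 : p0 * Real.sqrt (p2 / p0) = Real.sqrt (p0 * p2) := by
    rw [show p0 * p2 = p0 ^ 2 * (p2 / p0) by field_simp,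
      Real.sqrt_mul (sq_nonneg p0), Real.sqrt_sq hp0.le]
  have key2 : p2 = Real.sqrt (p0 * p2) * Real.sqrt (p2 / p0) := by
    rw [← Real.sqrt_mul (by positivity),
      show p0 * p2 * (p2 / p0) = p2 ^ 2 by field_simp, Real.sqrt_sq hp2.le]
  set e : Bool → ℝ := fun b => if b then 1 else Real.sqrt (p2 / p0) with he_def
  have hef : e false = Real.sqrt (p2 / p0) := rfl
  have het : e true = 1 := rfl
  have he1 : ∀ a, 1 ≤ e a := by
    intro a; rcases a
    · rw [hef]; exact hsge1
    · rw [het]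
  have htr : ∀ a, (∑ b, qval q0v q1v q2v a b * e b) ≤ lam * e a := by
    intro a
    rw [Fintype.sum_bool]
    have hA : 2 * r / n * Real.sqrt (p0 * p2) * Real.sqrt (p2 / p0) = q2v := by
      rw [mul_assoc, ← key2, hq2v]; ring
    have hB : q0v * Real.sqrt (p2 / p0) = Real.sqrt (q0v * q2v) := by
      rw [hs2, hq0v, ← key1]; ring
    rcases a
    · -- a = false
      show qval q0v q1v q2v false true * e true + qval q0v q1v q2v false false * e false
        ≤ lam * e false
      rw [show qval q0v q1v q2v false true = q2v from rfl,
        show qval q0v q1v q2v false false = q1v from rfl, hef, het, hlam_def, hs2]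
      nlinarith [hA]
    · -- a = true
      show qval q0v q1v q2v true true * e true + qval q0v q1v q2v true false * e false
        ≤ lam * e true
      rw [show qval q0v q1v q2v true true = q1v from rfl,
        show qval q0v q1v q2v true false = q0v from rfl, hef, het, hlam_def]
      nlinarith [hB]
  -- rewrite pathCount as a sum of indicators
  have hpc : ∀ F : Finset (Clause n 2), (pathCount n L F : ℝ)
      = ∑ w : Fin L → Lit n,
          (if (Function.Injective (fun j => (w j).1) ∧
              ∀ j : Fin L, ∀ hj : j.1 + 1 < L, ImpEdge F (w j) (w ⟨j.1 + 1, hj⟩))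
            then (1:ℝ) else 0) := by
    intro F
    simp only [pathCount, Nat.card_eq_fintype_card, Fintype.card_subtype, Finset.card_filter]
    push_cast
    rfl
  have hswap : ∑ F : Finset (Clause n 2),
        formulaWeight q0v q1v q2v F * (pathCount n L F : ℝ)
      = ∑ w : Fin L → Lit n, ∑ F : Finset (Clause n 2),
          formulaWeight q0v q1v q2v F *
            (if (Function.Injective (fun j => (w j).1) ∧
                ∀ j : Fin L, ∀ hj : j.1 + 1 < L, ImpEdge F (w j) (w ⟨j.1 + 1, hj⟩))
              then (1:ℝ) else 0) := by
    rw [Finset.sum_comm]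
    exact Finset.sum_congr rfl fun F _ => by rw [hpc F, Finset.mul_sum]
  rw [hswap]
  have hsumw : ∀ S : Finset (Clause n 2),
      (∑ F : Finset (Clause n 2),
        (if S ⊆ F then formulaWeight q0v q1v q2v F else 0))
      = ∏ c ∈ S, clauseProb q0v q1v q2v c := by
    intro S
    rw [← sum_weight_indicator (clauseProb q0v q1v q2v) S]
    exact Finset.sum_congr rfl fun F _ => by simp only [formulaWeight]
  cases L with
  | zero =>
      have hval : ∀ w : Fin 0 → Lit n,
          (∑ F : Finset (Clause n 2),
            formulaWeight q0v q1v q2v F *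
              (if (Function.Injective (fun j => (w j).1) ∧
                  ∀ j : Fin 0, ∀ hj : j.1 + 1 < 0, ImpEdge F (w j) (w ⟨j.1 + 1, hj⟩))
                then (1:ℝ) else 0)) = 1 := by
        intro w
        have hc : ∀ F : Finset (Clause n 2),
            (Function.Injective (fun j : Fin 0 => (w j).1) ∧
            ∀ j : Fin 0, ∀ hj : j.1 + 1 < 0, ImpEdge F (w j) (w ⟨j.1 + 1, hj⟩)) :=
          fun F => ⟨fun a => a.elim0, fun j => j.elim0⟩
        rw [Finset.sum_congr rfl fun F _ => by rw [if_pos (hc F), mul_one]]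
        have h1 := hsumw (∅ : Finset (Clause n 2))
        simpa using h1
      rw [Finset.sum_congr rfl fun w _ => hval w]
      rw [Finset.sum_const, Finset.card_univ]
      have hcard : Fintype.card (Fin 0 → Lit n) = 1 := by simp
      rw [hcard]
      simp only [Nat.zero_sub, pow_zero, mul_one, one_smul, Nat.cast_one]
      nlinarith [hsge1, hn1]
  | succ M =>
      -- evaluate the inner sum for each w
      have hw : ∀ w : Fin (M+1) → Lit n,
          (∑ F : Finset (Clause n 2),
            formulaWeight q0v q1v q2v F *
              (if (Function.Injective (fun j => (w j).1) ∧
                  ∀ j : Fin (M+1), ∀ hj : j.1 + 1 < M+1,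
                    ImpEdge F (w j) (w ⟨j.1 + 1, hj⟩))
                then (1:ℝ) else 0))
          = if Function.Injective (fun j => (w j).1)
              then Wseq (qval q0v q1v q2v) M (fun j => (w j).2) else 0 := by
        intro w
        by_cases hinj : Function.Injective (fun j => (w j).1)
        · rw [if_pos hinj]
          have hne := hne_of_inj w hinj
          have hstep1 : ∀ F : Finset (Clause n 2),
              formulaWeight q0v q1v q2v F *
                (if (Function.Injective (fun j => (w j).1) ∧
                    ∀ j : Fin (M+1), ∀ hj : j.1 + 1 < M+1,
                      ImpEdge F (w j) (w ⟨j.1 + 1, hj⟩))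
                  then (1:ℝ) else 0)
              = (if (Finset.image (fun j : Fin M =>
                    clauseOf (w j.castSucc) (w j.succ) (hne j)) univ) ⊆ F
                  then formulaWeight q0v q1v q2v F else 0) := by
            intro F
            rw [mul_ite, mul_one, mul_zero]
            congr 1
            rw [and_iff_right hinj, path_iff w F hne, Finset.image_subset_iff]
            simp
          rw [Finset.sum_congr rfl fun F _ => hstep1 F, hsumw,
            Finset.prod_image (fun j _ k _ h => clauseOf_inj w hinj hne h)]
          unfold Wseq
          exact Finset.prod_congr rfl fun j _ => clauseProb_clauseOf q0v q1v q2v _ _ (hne j)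
        · rw [if_neg hinj]
          refine Finset.sum_eq_zero fun F _ => ?_
          rw [if_neg fun hc => hinj hc.1, mul_zero]
      rw [Finset.sum_congr rfl fun w _ => hw w]
      -- bound
      have hWnn : ∀ s : Fin (M+1) → Bool, 0 ≤ Wseq (qval q0v q1v q2v) M s := by
        intro s
        exact Finset.prod_nonneg fun j _ => hqnn _ _
      have hstep2 : ∑ w : Fin (M+1) → Lit n,
            (if Function.Injective (fun j => (w j).1)
              then Wseq (qval q0v q1v q2v) M (fun j => (w j).2) else 0)
          ≤ ∑ w : Fin (M+1) → Lit n, Wseq (qval q0v q1v q2v) M (fun j => (w j).2) := by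
        refine Finset.sum_le_sum fun w _ => ?_
        split
        · exact le_refl _
        · exact hWnn _
      have hsplit : ∑ w : Fin (M+1) → Lit n, Wseq (qval q0v q1v q2v) M (fun j => (w j).2)
          = (n:ℝ) ^ (M+1) * ∑ s : Fin (M+1) → Bool, Wseq (qval q0v q1v q2v) M s := by
        rw [← Equiv.sum_comp (Equiv.arrowProdEquivProdArrow (Fin (M+1)) (fun _ => Fin n) (fun _ => Bool)).symm
          (fun w => Wseq (qval q0v q1v q2v) M (fun j => (w j).2)), Fintype.sum_prod_type]
        have hterm : ∀ v : Fin (M+1) → Fin n, ∀ s : Fin (M+1) → Bool,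
            Wseq (qval q0v q1v q2v) M
              (fun j => (((Equiv.arrowProdEquivProdArrow (Fin (M+1)) (fun _ => Fin n) (fun _ => Bool)).symm
                (v, s)) j).2)
            = Wseq (qval q0v q1v q2v) M s := fun v s => rfl
        rw [Finset.sum_congr rfl fun v _ => Finset.sum_congr rfl fun s _ => hterm v s]
        rw [Finset.sum_const, Finset.card_univ, nsmul_eq_mul]
        congr 1
        simp [Fintype.card_fun]
      have hchain : ∑ s : Fin (M+1) → Bool, Wseq (qval q0v q1v q2v) M s
          ≤ lam ^ M * (1 + Real.sqrt (p2 / p0)) := by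
        have h1 : ∑ s : Fin (M+1) → Bool, Wseq (qval q0v q1v q2v) M s
            = ∑ a, Hfun (qval q0v q1v q2v) M a := by
          have := sum_Wseq (qval q0v q1v q2v) M (fun _ => 1)
          simpa using this
        rw [h1, Fintype.sum_bool]
        have hH := Hfun_le (qval q0v q1v q2v) lam e hqnn hlam he1 htr M
        have ht := hH true
        have hf := hH false
        rw [het] at ht
        rw [hef] at hf
        nlinarith [ht, hf]
      have hnl : (n:ℝ) * lam = r * (p1 + 2 * Real.sqrt (p0 * p2)) := by
        rw [hlam_def, hs2, hq1v]
        field_simp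
      have hfinal : (n:ℝ) ^ (M+1) * (lam ^ M * (1 + Real.sqrt (p2 / p0)))
          ≤ 2 * n * Real.sqrt (p2 / p0) *
              (r * (p1 + 2 * Real.sqrt (p0 * p2))) ^ ((M+1) - 1) := by
        rw [Nat.succ_sub_one, ← hnl, mul_pow]
        have hX : (0:ℝ) ≤ (n:ℝ) ^ M * lam ^ M := by positivity
        have h2s : 1 + Real.sqrt (p2 / p0) ≤ 2 * Real.sqrt (p2 / p0) := by linarith
        calc (n:ℝ) ^ (M+1) * (lam ^ M * (1 + Real.sqrt (p2 / p0)))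
            = (n:ℝ) * (1 + Real.sqrt (p2 / p0)) * ((n:ℝ) ^ M * lam ^ M) := by ring
          _ ≤ (n:ℝ) * (2 * Real.sqrt (p2 / p0)) * ((n:ℝ) ^ M * lam ^ M) := by
              apply mul_le_mul_of_nonneg_right _ hX
              apply mul_le_mul_of_nonneg_left h2s hn'.le
          _ = 2 * n * Real.sqrt (p2 / p0) * ((n:ℝ) ^ M * lam ^ M) := by ring
      calc ∑ w : Fin (M+1) → Lit n,
            (if Function.Injective (fun j => (w j).1)
              then Wseq (qval q0v q1v q2v) M (fun j => (w j).2) else 0)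
          ≤ (n:ℝ) ^ (M+1) * ∑ s : Fin (M+1) → Bool, Wseq (qval q0v q1v q2v) M s := by
            rw [← hsplit]; exact hstep2
        _ ≤ (n:ℝ) ^ (M+1) * (lam ^ M * (1 + Real.sqrt (p2 / p0))) := by
            apply mul_le_mul_of_nonneg_left hchain (by positivity)
        _ ≤ 2 * n * Real.sqrt (p2 / p0) *
              (r * (p1 + 2 * Real.sqrt (p0 * p2))) ^ ((M+1) - 1) := hfinal
end

section
/- Fix p_0, p_1, p_2 > 0 with p_0 ≤ p_2, and fix ε > 0 and r ≤ 1/(p_1 + 2√(p_0 p_2)) − ε. Consider the random 2-CNF formula F̄ on n variables in which each of the C(n,2) clauses with two positive literals is present independently with probability q_2 = 2p_2 r/n, each of the n(n−1) clauses with one positive and one negative literal is present independently with probability q_1 = p_1 r/n, and each of the C(n,2) clauses with two negative literals is present independently with probability q_0 = 2p_0 r/n. Then F̄ is satisfiable with probability tending to 1 as n → ∞. -/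
open Finset

namespace RS

section Basics
variable {n : ℕ}
@[simp] lemma neg_neg (a : Lit n) : a.neg.neg = a := by simp [Lit.neg]
@[simp] lemma neg_fst (a : Lit n) : a.neg.1 = a.1 := rfl
lemma neg_ne (a : Lit n) : a.neg ≠ a := by
  simp [Lit.neg, Prod.ext_iff]

lemma neg_inj {a b : Lit n} (h : Lit.neg a = Lit.neg b) : a = b := by
  have h2 := congrArg Lit.neg h
  rwa [neg_neg, neg_neg] at h2
lemma fst_eq_cases {a b : Lit n} (h : a.1 = b.1) : b = a ∨ b = a.neg := by
  rcases a with ⟨x, s⟩; rcases b with ⟨y, u⟩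
  simp only [Lit.neg, Prod.ext_iff] at *
  rcases Bool.eq_false_or_eq_true u with hu | hu <;> rcases Bool.eq_false_or_eq_true s with hs | hs <;>
    subst hu <;> subst hs <;> simp [h.symm]

lemma pair_eq_pair {α} [DecidableEq α] {a b c d : α} (h : ({a, b} : Finset α) = {c, d})
    (hab : a ≠ b) : (a = c ∧ b = d) ∨ (a = d ∧ b = c) := by
  have ha : a ∈ ({c, d} : Finset α) := by rw [← h]; simp
  have hb : b ∈ ({c, d} : Finset α) := by rw [← h]; simp
  simp only [mem_insert, mem_singleton] at ha hb
  rcases ha with ha | ha <;> rcases hb with hb | hb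
  · exact absurd (ha.trans hb.symm) hab
  · exact Or.inl ⟨ha, hb⟩
  · exact Or.inr ⟨ha, hb⟩
  · exact absurd (ha.trans hb.symm) hab

lemma edge_clause {F : Finset (Clause n 2)} {a b : Lit n} (h : ImpEdge F a b) :
    a.1 ≠ b.1 ∧ ∃ c ∈ F, c.1 = ({a.neg, b} : Finset (Lit n)) := by
  obtain ⟨c, hcF, hna, hb, hne⟩ := h
  have hsub : ({a.neg, b} : Finset (Lit n)) ⊆ c.1 := by
    intro z hz; simp only [mem_insert, mem_singleton] at hz
    rcases hz with rfl | rfl <;> assumption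
  have hcard : ({a.neg, b} : Finset (Lit n)).card = 2 := by
    rw [card_insert_of_notMem (by simpa using hne), card_singleton]
  have hceq : c.1 = ({a.neg, b} : Finset (Lit n)) :=
    (eq_of_subset_of_card_le hsub (by rw [hcard, c.2.1])).symm
  refine ⟨?_, c, hcF, hceq⟩
  intro hab
  have : (c.1.image Prod.fst).card = 2 := c.2.2
  rw [hceq] at this
  simp only [image_insert, image_singleton, neg_fst] at this
  rw [hab] at this
  simp at this

lemma edge_vars {F : Finset (Clause n 2)} {a b : Lit n} (h : ImpEdge F a b) : a.1 ≠ b.1 :=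
  (edge_clause h).1

lemma edge_of_clause {F : Finset (Clause n 2)} {a b : Lit n} (hab : a.1 ≠ b.1) {c : Clause n 2}
    (hc : c ∈ F) (hcc : c.1 = ({a.neg, b} : Finset (Lit n))) : ImpEdge F a b := by
  refine ⟨c, hc, ?_, ?_, ?_⟩
  · rw [hcc]; simp
  · rw [hcc]; simp
  · intro hh; exact hab (by rw [← hh]; rfl)

lemma edge_skew {F : Finset (Clause n 2)} {a b : Lit n} (h : ImpEdge F a b) :
    ImpEdge F b.neg a.neg := by
  obtain ⟨hab, c, hc, hcc⟩ := edge_clause h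
  refine edge_of_clause (by simpa using hab.symm) hc ?_
  rw [hcc, neg_neg]
  exact pair_comm a.neg b


end Basics

section Prob
variable {n : ℕ} (q0 q1 q2 : ℝ)
lemma clauseProb_cases (c : Clause n 2) :
    clauseProb q0 q1 q2 c = q0 ∨ clauseProb q0 q1 q2 c = q1 ∨ clauseProb q0 q1 q2 c = q2 := by
  unfold clauseProb; split
  · exact Or.inr (Or.inr rfl)
  · split
    · exact Or.inr (Or.inl rfl)
    · exact Or.inl rfl

lemma sum_formulaWeight :
    ∑ F : Finset (Clause n 2), formulaWeight q0 q1 q2 F = 1 := by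
  classical
  have h := Finset.prod_add (fun c : Clause n 2 => clauseProb q0 q1 q2 c)
      (fun c => 1 - clauseProb q0 q1 q2 c) univ
  simp only [add_sub_cancel, Finset.prod_const_one, Finset.powerset_univ] at h
  refine Eq.trans ?_ h.symm
  apply Finset.sum_congr rfl
  intro F _
  rw [formulaWeight, Finset.compl_eq_univ_sdiff]

lemma sum_weight_superset (S : Finset (Clause n 2)) :
    ∑ F : Finset (Clause n 2), formulaWeight q0 q1 q2 F * (if S ⊆ F then 1 else 0)
      = ∏ c ∈ S, clauseProb q0 q1 q2 c := by
  classical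
  have h1 : ∀ F : Finset (Clause n 2),
      formulaWeight q0 q1 q2 F * (if S ⊆ F then 1 else 0)
        = if S ⊆ F then formulaWeight q0 q1 q2 F else 0 := by
    intro F; split <;> simp
  simp only [h1]
  rw [← Finset.sum_filter]
  have key : ∑ F ∈ filter (fun F => S ⊆ F) univ, formulaWeight q0 q1 q2 F
      = ∑ T ∈ Sᶜ.powerset, (∏ c ∈ S, clauseProb q0 q1 q2 c) *
        ((∏ c ∈ T, clauseProb q0 q1 q2 c) * ∏ c ∈ Sᶜ \ T, (1 - clauseProb q0 q1 q2 c)) := by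
    refine Finset.sum_nbij' (fun F => F \ S) (fun T => S ∪ T) ?_ ?_ ?_ ?_ ?_
    · intro F hF
      simp only [Finset.mem_filter, Finset.mem_univ, true_and] at hF
      rw [Finset.mem_powerset]
      intro z hz
      simp only [Finset.mem_sdiff] at hz
      simp [Finset.mem_compl, hz.2]
    · intro T _
      simp
    · intro F hF
      simp only [Finset.mem_filter, Finset.mem_univ, true_and] at hF
      exact Finset.union_sdiff_of_subset hF
    · intro T hT
      rw [Finset.mem_powerset] at hT
      apply Finset.union_sdiff_cancel_left
      rw [Finset.disjoint_left]
      intro z hzS hzT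
      have := hT hzT
      simp only [Finset.mem_compl] at this
      exact this hzS
    · intro F hF
      simp only [Finset.mem_filter, Finset.mem_univ, true_and] at hF
      rw [formulaWeight]
      have hsplit : ∏ c ∈ F, clauseProb q0 q1 q2 c
          = (∏ c ∈ S, clauseProb q0 q1 q2 c) * ∏ c ∈ F \ S, clauseProb q0 q1 q2 c := by
        rw [← Finset.prod_union Finset.disjoint_sdiff, Finset.union_sdiff_of_subset hF]
      have hcompl : Fᶜ = Sᶜ \ (F \ S) := by
        ext z
        simp only [Finset.mem_compl, Finset.mem_sdiff]
        constructor
        · intro hz; exact ⟨fun hzS => hz (hF hzS), fun hzz => hz hzz.1⟩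
        · intro hz hzF
          rcases Classical.em (z ∈ S) with h | h
          · exact hz.1 h
          · exact hz.2 ⟨hzF, h⟩
      rw [hsplit, hcompl, mul_assoc]
  rw [key, ← Finset.mul_sum]
  have h2 : ∑ T ∈ Sᶜ.powerset, (∏ c ∈ T, clauseProb q0 q1 q2 c) *
      ∏ c ∈ Sᶜ \ T, (1 - clauseProb q0 q1 q2 c) = 1 := by
    have h := Finset.prod_add (fun c : Clause n 2 => clauseProb q0 q1 q2 c)
        (fun c => 1 - clauseProb q0 q1 q2 c) Sᶜ
    simp only [add_sub_cancel, Finset.prod_const_one] at h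
    exact h.symm
  rw [h2, mul_one]

end Prob

section TwoSat
variable {n : ℕ}


def Rch (F : Finset (Clause n 2)) (a b : Lit n) : Prop :=
  Relation.ReflTransGen (fun u v => ImpEdge F u v) a b

lemma rch_single {F : Finset (Clause n 2)} {a b : Lit n} (h : ImpEdge F a b) : Rch F a b :=
  Relation.ReflTransGen.single h

open scoped Classical in
noncomputable def ds (F : Finset (Clause n 2)) (ℓ : Lit n) : Finset (Lit n) :=
  univ.filter (fun z => Rch F z ℓ)

lemma mem_ds {F : Finset (Clause n 2)} {z ℓ : Lit n} : z ∈ ds F ℓ ↔ Rch F z ℓ := by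
  simp [ds]

lemma ds_mono {F : Finset (Clause n 2)} {a b : Lit n} (h : Rch F a b) : ds F a ⊆ ds F b := by
  intro z hz
  rw [mem_ds] at *
  exact hz.trans h

noncomputable def enc : Finset (Lit n) → ℕ := fun s => (Fintype.equivFin (Finset (Lit n)) s : ℕ)

lemma enc_inj {s t : Finset (Lit n)} (h : enc s = enc t) : s = t := by
  have := Fin.val_injective h
  exact (Fintype.equivFin (Finset (Lit n))).injective this

def klt (F : Finset (Clause n 2)) (a b : Lit n) : Prop :=
  (ds F a).card < (ds F b).card ∨
    ((ds F a).card = (ds F b).card ∧ enc (ds F a) < enc (ds F b))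

lemma klt_total {F : Finset (Clause n 2)} {a b : Lit n} (h : ds F a ≠ ds F b) :
    klt F a b ∨ klt F b a := by
  have hne : enc (ds F a) ≠ enc (ds F b) := fun hh => h (enc_inj hh)
  unfold klt; omega

lemma klt_asymm {F : Finset (Clause n 2)} {a b : Lit n} (h : klt F a b) : ¬ klt F b a := by
  unfold klt at *; omega

lemma klt_card_le {F : Finset (Clause n 2)} {a b : Lit n} (h : klt F a b) :
    (ds F a).card ≤ (ds F b).card := by
  unfold klt at h; omega

lemma rch_both_of_ds_eq {F : Finset (Clause n 2)} {a b : Lit n} (h : ds F a = ds F b) :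
    Rch F a b ∧ Rch F b a := by
  constructor
  · have : a ∈ ds F b := h ▸ mem_ds.2 Relation.ReflTransGen.refl
    exact mem_ds.1 this
  · have : b ∈ ds F a := h.symm ▸ mem_ds.2 Relation.ReflTransGen.refl
    exact mem_ds.1 this

lemma clause_two (c : Clause n 2) : ∃ a b : Lit n, a ≠ b ∧ a.1 ≠ b.1 ∧ c.1 = {a, b} := by
  obtain ⟨a, b, hab, hs⟩ := Finset.card_eq_two.1 c.2.1
  refine ⟨a, b, hab, ?_, hs⟩
  intro hfst
  have h2 := c.2.2
  rw [hs] at h2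
  simp only [Finset.image_insert, Finset.image_singleton] at h2
  rw [hfst] at h2
  simp at h2

lemma sat_of_no_contra (F : Finset (Clause n 2))
    (h : ∀ ℓ : Lit n, ¬(Rch F ℓ ℓ.neg ∧ Rch F ℓ.neg ℓ)) : ∃ σ, SatF σ F := by
  classical
  have hdsne : ∀ ℓ : Lit n, ds F ℓ ≠ ds F ℓ.neg := by
    intro ℓ hds
    obtain ⟨h1, h2⟩ := rch_both_of_ds_eq hds
    exact h ℓ ⟨h1, h2⟩
  refine ⟨fun x => if klt F (Lit.neg ((x, true) : Lit n)) (x, true) then true else false, ?_⟩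
  intro c hc
  obtain ⟨a, b, hab, habv, hcc⟩ := clause_two c
  have e1 : ImpEdge F a.neg b := by
    refine edge_of_clause (by simpa using habv) hc ?_
    rw [hcc, neg_neg]
  have e2 : ImpEdge F b.neg a := by
    refine edge_of_clause (by simpa using habv.symm) hc ?_
    rw [hcc, neg_neg, pair_comm]
  have keyval : klt F a.neg a ∨ klt F b.neg b := by
    by_contra hcon
    push_neg at hcon
    obtain ⟨hva, hvb⟩ := hcon
    have ha' : klt F a a.neg := by
      rcases klt_total (Ne.symm (hdsne a) : ds F a.neg ≠ ds F a) with h' | h'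
      · exact absurd h' hva
      · exact h'
    have hb' : klt F b b.neg := by
      rcases klt_total (Ne.symm (hdsne b) : ds F b.neg ≠ ds F b) with h' | h'
      · exact absurd h' hvb
      · exact h'
    have c1 : (ds F a.neg).card ≤ (ds F b).card := Finset.card_le_card (ds_mono (rch_single e1))
    have c2 : (ds F b.neg).card ≤ (ds F a).card := Finset.card_le_card (ds_mono (rch_single e2))
    have c3 := klt_card_le ha'
    have c4 := klt_card_le hb'
    have e11 : ds F a.neg = ds F b :=
      Finset.eq_of_subset_of_card_le (ds_mono (rch_single e1)) (by omega)
    have e22 : ds F b.neg = ds F a :=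
      Finset.eq_of_subset_of_card_le (ds_mono (rch_single e2)) (by omega)
    have ha2 : enc (ds F a) < enc (ds F a.neg) := by
      rcases ha' with h' | h'
      · omega
      · exact h'.2
    have hb2 : enc (ds F b) < enc (ds F b.neg) := by
      rcases hb' with h' | h'
      · omega
      · exact h'.2
    rw [e11] at ha2
    rw [e22] at hb2
    omega
  have litval : ∀ ℓ : Lit n, klt F (Lit.neg ℓ) ℓ →
      (if klt F (Lit.neg ((ℓ.1, true) : Lit n)) (ℓ.1, true) then true else false) = ℓ.2 := by
    rintro ⟨x, s⟩ hℓ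
    cases s
    · have hn : ¬ klt F (Lit.neg ((x, true) : Lit n)) ((x, true) : Lit n) := by
        have h1 : (Lit.neg ((x, true) : Lit n)) = ((x, false) : Lit n) := rfl
        have h2 : ((x, true) : Lit n) = Lit.neg ((x, false) : Lit n) := rfl
        rw [h1, h2]
        exact klt_asymm hℓ
      exact if_neg hn
    · exact if_pos hℓ
  rcases keyval with hv | hv
  · exact ⟨a, by rw [hcc]; simp, litval a hv⟩
  · exact ⟨b, by rw [hcc]; simp, litval b hv⟩




def IsW (F : Finset (Clause n 2)) (w : ℕ → Lit n) (m : ℕ) : Prop :=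
  ∀ i, i < m → ImpEdge F (w i) (w (i+1))

lemma isW_rch {F : Finset (Clause n 2)} {w : ℕ → Lit n} {m : ℕ} (hw : IsW F w m) :
    ∀ i d, i + d ≤ m → Rch F (w i) (w (i+d)) := by
  intro i d
  induction d with
  | zero => exact fun _ => Relation.ReflTransGen.refl
  | succ d ih =>
    intro hle
    exact Relation.ReflTransGen.tail (ih (by omega)) (hw (i+d) (by omega))

lemma rch_to_walk {F : Finset (Clause n 2)} {a b : Lit n} (h : Rch F a b) :
    ∃ m w, IsW F w m ∧ w 0 = a ∧ w m = b := by
  induction h with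
  | refl => exact ⟨0, fun _ => a, fun i hi => absurd hi (by omega), rfl, rfl⟩
  | @tail b' c hab hbc ih =>
    obtain ⟨m, w, hw, h0, hm⟩ := ih
    refine ⟨m+1, fun i => if i ≤ m then w i else c, ?_, ?_, ?_⟩
    · intro i hi
      rcases Nat.lt_or_ge i m with hlt | hge
      · simp only [if_pos (by omega : i ≤ m), if_pos (by omega : i+1 ≤ m)]
        exact hw i hlt
      · have hi' : i = m := by omega
        simp only [if_pos (by omega : i ≤ m), if_neg (by omega : ¬ i+1 ≤ m)]
        rw [hi', hm]; exact hbc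
    · simp only [if_pos (Nat.zero_le m)]; exact h0
    · simp only [if_neg (by omega : ¬ m+1 ≤ m)]

lemma snake_exists {F : Finset (Clause n 2)}
    (hex : ∃ ℓ : Lit n, Rch F ℓ (Lit.neg ℓ) ∧ Rch F (Lit.neg ℓ) ℓ) :
    ∃ s b, 2 ≤ s ∧ IsW F b s ∧ b s = Lit.neg (b 0) ∧ Rch F (Lit.neg (b 0)) (b 0) ∧
      ∀ i j, i < s → j < s → (b i).1 = (b j).1 → i = j := by
  classical
  have hP : ∃ m, ∃ w : ℕ → Lit n, IsW F w m ∧ w m = Lit.neg (w 0) ∧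
      Rch F (Lit.neg (w 0)) (w 0) := by
    obtain ⟨ℓ, h1, h2⟩ := hex
    obtain ⟨m, w, hw, h0, hm⟩ := rch_to_walk h1
    exact ⟨m, w, hw, by rw [hm, h0], by rw [h0]; exact h2⟩
  obtain ⟨w, hw, hlast, hback⟩ := Nat.find_spec hP
  set m := Nat.find hP with hmdef
  have hmin : ∀ m', m' < m → ¬ ∃ w : ℕ → Lit n, IsW F w m' ∧ w m' = Lit.neg (w 0) ∧
      Rch F (Lit.neg (w 0)) (w 0) := fun m' hm' => Nat.find_min hP hm'
  have hm2 : 2 ≤ m := by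
    by_contra hlt
    push_neg at hlt
    rcases (by omega : m = 0 ∨ m = 1) with h0 | h1
    · rw [h0] at hlast
      exact neg_ne _ hlast.symm
    · have he := hw 0 (by omega)
      rw [h1] at hlast
      have := edge_vars he
      rw [hlast, neg_fst] at this
      exact this rfl
  have key : ∀ i j, i < j → j < m → (w i).1 ≠ (w j).1 := by
    intro i j hij hjm hfst
    rcases fst_eq_cases hfst with heq | heq
    · refine hmin (m - (j - i)) (by omega) ?_
      refine ⟨fun x => if x ≤ i then w x else w (x + (j - i)), ?_, ?_, ?_⟩
      · intro x hx
        rcases Nat.lt_or_ge x i with h1 | h1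
        · simp only [if_pos (by omega : x ≤ i), if_pos (by omega : x+1 ≤ i)]
          exact hw x (by omega)
        · rcases Nat.eq_or_lt_of_le h1 with h2 | h2
          · simp only [if_pos (by omega : x ≤ i), if_neg (by omega : ¬ x+1 ≤ i)]
            have h3 : x + 1 + (j - i) = j + 1 := by omega
            rw [h3]
            have h4 : w x = w j := by rw [h2] at heq; exact heq.symm
            rw [h4]
            exact hw j hjm
          · simp only [if_neg (by omega : ¬ x ≤ i), if_neg (by omega : ¬ x+1 ≤ i)]
            have h3 : x + 1 + (j - i) = x + (j - i) + 1 := by omega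
            rw [h3]
            exact hw (x + (j - i)) (by omega)
      · have h1 : ¬ (m - (j-i)) ≤ i := by omega
        simp only [if_neg h1, if_pos (Nat.zero_le i)]
        have h2 : m - (j - i) + (j - i) = m := by omega
        rw [h2, hlast]
      · simp only [if_pos (Nat.zero_le i)]; exact hback
    · refine hmin (j - i) (by omega) ?_
      refine ⟨fun x => w (x + i), ?_, ?_, ?_⟩
      · intro x hx
        show ImpEdge F (w (x + i)) (w (x + 1 + i))
        have h3 : x + 1 + i = x + i + 1 := by omega
        rw [h3]
        exact hw (x + i) (by omega)
      · show w (j - i + i) = Lit.neg (w (0 + i))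
        have h3 : j - i + i = j := by omega
        rw [h3, zero_add]
        exact heq
      · show Rch F (Lit.neg (w (0 + i))) (w (0 + i))
        rw [zero_add, ← heq]
        have r1 : Rch F (w j) (w m) := by
          have := isW_rch hw j (m - j) (by omega)
          rwa [show j + (m-j) = m from by omega] at this
        have r2 : Rch F (w 0) (w i) := by
          have := isW_rch hw 0 i (by omega)
          rwa [zero_add] at this
        rw [hlast] at r1
        exact (r1.trans hback).trans r2
  refine ⟨m, w, hm2, hw, hlast, hback, ?_⟩
  intro i j hi hj hfst
  rcases lt_trichotomy i j with h | h | h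
  · exact absurd hfst (key i j h hj)
  · exact h
  · exact absurd hfst.symm (key j i h hi)

lemma cert_exists {F : Finset (Clause n 2)} (hunsat : ¬ ∃ σ, SatF σ F) :
    ∃ (t : ℕ) (w : ℕ → Lit n) (u v : Lit n) (ju jv : ℕ),
      2 ≤ t ∧ t ≤ n ∧
      (∀ i j, i < t → j < t → (w i).1 = (w j).1 → i = j) ∧
      (∀ i, i + 1 < t → ImpEdge F (w i) (w (i+1))) ∧
      ju < t ∧ u.1 = (w ju).1 ∧ jv < t ∧ v.1 = (w jv).1 ∧
      ImpEdge F u (w 0) ∧ ImpEdge F (w (t-1)) v ∧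
      ({Lit.neg u, w 0} : Finset (Lit n)) ≠ {Lit.neg (w (t-1)), v} := by
  classical
  have hex : ∃ ℓ : Lit n, Rch F ℓ (Lit.neg ℓ) ∧ Rch F (Lit.neg ℓ) ℓ := by
    rcases Classical.em (∃ ℓ : Lit n, Rch F ℓ (Lit.neg ℓ) ∧ Rch F (Lit.neg ℓ) ℓ) with h | h
    · exact h
    · exact absurd (sat_of_no_contra F (fun ℓ hh => h ⟨ℓ, hh⟩)) hunsat
  obtain ⟨s, b, hs2, hb, hlast, hback, hbinj⟩ := snake_exists hex
  obtain ⟨r, q, hq, hq0, hqr⟩ := rch_to_walk hback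
  have hr1 : 1 ≤ r := by
    rcases Nat.eq_zero_or_pos r with h | h
    · exfalso
      subst h
      rw [hq0] at hqr
      exact neg_ne _ hqr
    · exact h
  have hPk : ∃ k, 1 ≤ k ∧ k ≤ r ∧ ((∃ i, i < s ∧ (q k).1 = (b i).1) ∨
      (∃ i, 1 ≤ i ∧ i < k ∧ (q k).1 = (q i).1)) :=
    ⟨r, hr1, le_refl r, Or.inl ⟨0, by omega, by rw [hqr]⟩⟩
  obtain ⟨hk1, hkr, hkP⟩ := Nat.find_spec hPk
  set k := Nat.find hPk with hkdef
  have hfresh : ∀ i, 1 ≤ i → i < k → (∀ jj, jj < s → (q i).1 ≠ (b jj).1) ∧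
      (∀ i', 1 ≤ i' → i' < i → (q i).1 ≠ (q i').1) := by
    intro i h1 h2
    have hni := Nat.find_min hPk h2
    have hir : i ≤ r := by omega
    constructor
    · intro jj hjj heq
      exact hni ⟨h1, hir, Or.inl ⟨jj, hjj, heq⟩⟩
    · intro i' h1' h2' heq
      exact hni ⟨h1, hir, Or.inr ⟨i', h1', h2', heq⟩⟩
  set t := s + k - 1 with htdef
  set w : ℕ → Lit n := fun i => if i < s then Lit.neg (b (s - 1 - i)) else q (i - (s - 1)) with hwdef
  have hw_b : ∀ i, i < s → w i = Lit.neg (b (s - 1 - i)) := fun i h => if_pos h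
  have hw_q : ∀ i, s ≤ i → w i = q (i - (s - 1)) := fun i h => if_neg (by omega)
  have hw_sm1 : w (s-1) = Lit.neg (b 0) := by
    rw [hw_b (s-1) (by omega)]
    congr 2
    omega
  have hw_sm1q : w (s-1) = q 0 := by rw [hw_sm1, ← hq0]
  have hw_q' : ∀ i, 1 ≤ i → w (s-1+i) = q i := by
    intro i h
    rw [hw_q (s-1+i) (by omega)]
    congr 1
    omega
  have ht2 : 2 ≤ t := by omega
  have hpath : ∀ i, i + 1 < t → ImpEdge F (w i) (w (i+1)) := by
    intro i hi
    rcases Nat.lt_or_ge (i+1) s with h1 | h1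
    · rw [hw_b i (by omega), hw_b (i+1) h1]
      have he := hb (s - 2 - i) (by omega)
      rw [show s - 2 - i + 1 = s - 1 - i from by omega] at he
      have hsk := edge_skew he
      rw [show s - 1 - (i+1) = s - 2 - i from by omega]
      exact hsk
    · set d := i - (s - 1) with hd
      have hwi : w i = q d := by
        rcases Nat.eq_zero_or_pos d with h0 | h0
        · rw [h0, show i = s - 1 from by omega, hw_sm1q]
        · rw [hw_q i (by omega)]
      have hwi1 : w (i+1) = q (d+1) := by
        rw [hw_q (i+1) (by omega)]
        congr 1
        omega
      rw [hwi, hwi1]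
      exact hq d (by omega)
  have hu_edge : ImpEdge F (b 0) (w 0) := by
    rw [hw_b 0 (by omega)]
    rw [show s - 1 - 0 = s - 1 from by omega]
    have he := hb (s-1) (by omega)
    rw [show s - 1 + 1 = s from by omega, hlast] at he
    have hsk := edge_skew he
    rwa [neg_neg] at hsk
  have hwt1 : w (t-1) = q (k-1) := by
    rcases Nat.eq_or_lt_of_le hk1 with h | h
    · rw [show t - 1 = s - 1 from by omega, hw_sm1q, ← h]
    · rw [show t - 1 = s - 1 + (k-1) from by omega]
      exact hw_q' (k-1) (by omega)
  have hv_edge : ImpEdge F (w (t-1)) (q k) := by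
    rw [hwt1]
    have := hq (k-1) (by omega)
    rwa [show k-1+1 = k from by omega] at this
  have hjv : ∃ jv, jv < t ∧ (q k).1 = (w jv).1 := by
    rcases hkP with ⟨i, his, heq⟩ | ⟨i, hi1, hik, heq⟩
    · refine ⟨s - 1 - i, by omega, ?_⟩
      rw [hw_b (s-1-i) (by omega), show s - 1 - (s - 1 - i) = i from by omega, neg_fst]
      exact heq
    · refine ⟨s - 1 + i, by omega, ?_⟩
      rw [hw_q' i hi1]
      exact heq
  obtain ⟨jv, hjvt, hjveq⟩ := hjv
  have hwinj : ∀ i j, i < t → j < t → (w i).1 = (w j).1 → i = j := by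
    intro i j hi hj heq
    rcases Nat.lt_or_ge i s with h1 | h1 <;> rcases Nat.lt_or_ge j s with h2 | h2
    · rw [hw_b i h1, hw_b j h2, neg_fst, neg_fst] at heq
      have := hbinj _ _ (by omega) (by omega) heq
      omega
    · exfalso
      rw [hw_b i h1, hw_q j h2, neg_fst] at heq
      exact (hfresh (j - (s-1)) (by omega) (by omega)).1 (s-1-i) (by omega) heq.symm
    · exfalso
      rw [hw_q i h1, hw_b j h2, neg_fst] at heq
      exact (hfresh (i - (s-1)) (by omega) (by omega)).1 (s-1-j) (by omega) heq
    · rw [hw_q i h1, hw_q j h2] at heq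
      by_contra hne
      rcases Nat.lt_or_ge (i - (s-1)) (j - (s-1)) with hlt | hge
      · exact (hfresh (j - (s-1)) (by omega) (by omega)).2 (i - (s-1)) (by omega) hlt heq.symm
      · have hlt : j - (s-1) < i - (s-1) := by omega
        exact (hfresh (i - (s-1)) (by omega) (by omega)).2 (j - (s-1)) (by omega) hlt heq
  have hclne : ({Lit.neg (b 0), w 0} : Finset (Lit n)) ≠ {Lit.neg (w (t-1)), q k} := by
    rw [hw_b 0 (by omega), show s - 1 - 0 = s - 1 from by omega, hwt1]
    intro hEq
    have hne0 : Lit.neg (b 0) ≠ Lit.neg (b (s-1)) := by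
      intro hh
      have := congrArg Prod.fst hh
      rw [neg_fst, neg_fst] at this
      have := hbinj 0 (s-1) (by omega) (by omega) this
      omega
    rcases pair_eq_pair hEq hne0 with ⟨hA, hB⟩ | ⟨hA, hB⟩
    · have hb0 : b 0 = q (k-1) := neg_inj hA
      rcases Nat.eq_or_lt_of_le hk1 with h | h
      · rw [← h] at hb0
        rw [show (1:ℕ) - 1 = 0 from rfl] at hb0
        rw [hq0] at hb0
        exact neg_ne _ hb0.symm
      · exact (hfresh (k-1) (by omega) (by omega)).1 0 (by omega)
          (congrArg Prod.fst hb0).symm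
    · have hbs : b (s-1) = q (k-1) := neg_inj hB
      rcases Nat.eq_or_lt_of_le hk1 with h | h
      · rw [← h, show (1:ℕ) - 1 = 0 from rfl, hq0] at hbs
        have := congrArg Prod.fst hbs
        rw [neg_fst] at this
        have := hbinj (s-1) 0 (by omega) (by omega) this
        omega
      · exact (hfresh (k-1) (by omega) (by omega)).1 (s-1) (by omega)
          (congrArg Prod.fst hbs).symm
  have htn : t ≤ n := by
    have hinj : Function.Injective (fun i : Fin t => (w i.1).1) := by
      intro i j h
      exact Fin.ext (hwinj i.1 j.1 i.2 j.2 h)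
    have := Fintype.card_le_of_injective _ hinj
    simpa using this
  refine ⟨t, w, b 0, q k, s-1, jv, ht2, htn, hwinj, hpath, by omega, ?_, hjvt, hjveq,
    hu_edge, hv_edge, ?_⟩
  · rw [hw_sm1, neg_fst]
  · exact hclne



def M (q0 q1 q2 : ℝ) : Bool → Bool → ℝ
  | false, true => q2
  | true, false => q0
  | _, _ => q1

def mkCl {n : ℕ} (a b : Lit n) (h : a.1 ≠ b.1) : Clause n 2 :=
  ⟨{Lit.neg a, b}, by
    have hne : Lit.neg a ≠ b := fun hh => h (by rw [← neg_fst a, hh])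
    constructor
    · rw [Finset.card_insert_of_notMem (by simpa using hne), Finset.card_singleton]
    · rw [Finset.image_insert, Finset.image_singleton, neg_fst]
      rw [Finset.card_insert_of_notMem (by simpa using h), Finset.card_singleton]⟩

lemma mkCl_carrier {a b : Lit n} (h : a.1 ≠ b.1) :
    (mkCl a b h).1 = ({Lit.neg a, b} : Finset (Lit n)) := rfl

lemma clauseProb_mkCl (q0 q1 q2 : ℝ) {a b : Lit n} (h : a.1 ≠ b.1) :
    clauseProb q0 q1 q2 (mkCl a b h) = M q0 q1 q2 a.2 b.2 := by
  have hxab : a.1 ≠ b.1 := h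
  have hne : Lit.neg a ≠ b := fun hh => h (by rw [← neg_fst a, hh])
  have hposc : (mkCl a b h).posCount
      = ((if (!a.2) = true then 1 else 0) + (if b.2 = true then 1 else 0) : ℕ) := by
    unfold Clause.posCount
    rw [mkCl_carrier, Finset.filter_insert, Finset.filter_singleton]
    have hns : (Lit.neg a).2 = !a.2 := rfl
    rw [hns]
    rcases Bool.eq_false_or_eq_true (!a.2) with h1 | h1 <;>
      rcases Bool.eq_false_or_eq_true b.2 with h2 | h2 <;>
      rw [h1, h2] <;>
      simp [Finset.card_pair hne]
  rcases a with ⟨xa, sa⟩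
  rcases b with ⟨xb, sb⟩
  cases sa <;> cases sb <;>
    simp_all [clauseProb, M]

section Eig
variable (q0 q1 q2 : ℝ)

noncomputable def vv : Bool → ℝ := fun a => if a then Real.sqrt q0 else Real.sqrt q2

noncomputable def fr : ℕ → Bool → ℝ
  | 0, _ => 1
  | (t+1), a => M q0 q1 q2 a false * fr t false + M q0 q1 q2 a true * fr t true

variable (hq0 : 0 ≤ q0) (hq1 : 0 ≤ q1) (hq2 : 0 ≤ q2) (hq02 : q0 ≤ q2)

include hq0 hq1 hq2 in
lemma M_nonneg : ∀ a b, 0 ≤ M q0 q1 q2 a b := by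
  intro a b; cases a <;> cases b <;> simpa [M]

include hq0 hq2 in
lemma eig : ∀ a, M q0 q1 q2 a false * vv q0 q2 false + M q0 q1 q2 a true * vv q0 q2 true
    = (q1 + Real.sqrt (q0 * q2)) * vv q0 q2 a := by
  have hs : Real.sqrt (q0 * q2) = Real.sqrt q0 * Real.sqrt q2 := Real.sqrt_mul hq0 q2
  have h0 : Real.sqrt q0 * Real.sqrt q0 = q0 := Real.mul_self_sqrt hq0
  have h2 : Real.sqrt q2 * Real.sqrt q2 = q2 := Real.mul_self_sqrt hq2
  intro a
  cases a
  · show q1 * Real.sqrt q2 + q2 * Real.sqrt q0 = (q1 + Real.sqrt (q0 * q2)) * Real.sqrt q2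
    rw [hs]
    linear_combination (-Real.sqrt q0) * h2
  · show q0 * Real.sqrt q2 + q1 * Real.sqrt q0 = (q1 + Real.sqrt (q0 * q2)) * Real.sqrt q0
    rw [hs]
    linear_combination (-Real.sqrt q2) * h0

include hq0 hq1 hq2 in
lemma fr_nonneg : ∀ t a, 0 ≤ fr q0 q1 q2 t a := by
  intro t
  induction t with
  | zero => intro a; exact zero_le_one
  | succ t ih =>
    intro a
    have := M_nonneg q0 q1 q2 hq0 hq1 hq2
    exact add_nonneg (mul_nonneg (this a false) (ih false)) (mul_nonneg (this a true) (ih true))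

include hq0 hq1 hq2 hq02 in
lemma fr_le (hq0pos : 0 < q0) :
    ∀ t a, fr q0 q1 q2 t a ≤ (q1 + Real.sqrt (q0 * q2))^t * vv q0 q2 a / Real.sqrt q0 := by
  have hsq0 : 0 < Real.sqrt q0 := Real.sqrt_pos.2 hq0pos
  have hvv : ∀ a, Real.sqrt q0 ≤ vv q0 q2 a := by
    intro a
    cases a
    · exact Real.sqrt_le_sqrt hq02
    · exact le_refl _
  have hρ : 0 ≤ q1 + Real.sqrt (q0 * q2) := add_nonneg hq1 (Real.sqrt_nonneg _)
  intro t
  induction t with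
  | zero =>
    intro a
    show (1:ℝ) ≤ (q1 + Real.sqrt (q0 * q2))^0 * vv q0 q2 a / Real.sqrt q0
    rw [pow_zero, one_mul, le_div_iff₀ hsq0, one_mul]
    exact hvv a
  | succ t ih =>
    intro a
    have hM := M_nonneg q0 q1 q2 hq0 hq1 hq2
    calc fr q0 q1 q2 (t+1) a
        = M q0 q1 q2 a false * fr q0 q1 q2 t false + M q0 q1 q2 a true * fr q0 q1 q2 t true := rfl
      _ ≤ M q0 q1 q2 a false * ((q1 + Real.sqrt (q0 * q2))^t * vv q0 q2 false / Real.sqrt q0)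
          + M q0 q1 q2 a true * ((q1 + Real.sqrt (q0 * q2))^t * vv q0 q2 true / Real.sqrt q0) := by
          gcongr
          · exact hM a false
          · exact ih false
          · exact hM a true
          · exact ih true
      _ = ((q1 + Real.sqrt (q0 * q2))^t / Real.sqrt q0) *
            (M q0 q1 q2 a false * vv q0 q2 false + M q0 q1 q2 a true * vv q0 q2 true) := by ring
      _ = ((q1 + Real.sqrt (q0 * q2))^t / Real.sqrt q0) *
            ((q1 + Real.sqrt (q0 * q2)) * vv q0 q2 a) := by rw [eig q0 q1 q2 hq0 hq2]
      _ = (q1 + Real.sqrt (q0 * q2))^(t+1) * vv q0 q2 a / Real.sqrt q0 := by ring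

lemma signsum_aux : ∀ (t : ℕ) (h : Bool → ℝ),
    ∑ s_ : Fin (t+1) → Bool, h (s_ 0) * ∏ i : Fin t, M q0 q1 q2 (s_ i.castSucc) (s_ i.succ)
      = h false * fr q0 q1 q2 t false + h true * fr q0 q1 q2 t true := by
  intro t
  induction t with
  | zero =>
    intro h
    rw [Fintype.sum_equiv (Equiv.funUnique (Fin 1) Bool) _ (fun b => h b) (by
      intro s_
      simp [Equiv.funUnique])]
    rw [Fintype.sum_bool]
    show h true + h false = h false * 1 + h true * 1
    ring
  | succ t ih =>
    intro h
    rw [← Equiv.sum_comp (Fin.consEquiv (fun _ : Fin (t+2) => Bool))]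
    rw [Fintype.sum_prod_type]
    have hterm : ∀ (a : Bool) (rest : Fin (t+1) → Bool),
        h (((Fin.consEquiv (fun _ : Fin (t+2) => Bool)) (a, rest)) 0) *
          ∏ i : Fin (t+1), M q0 q1 q2 (((Fin.consEquiv (fun _ : Fin (t+2) => Bool)) (a, rest)) i.castSucc) (((Fin.consEquiv (fun _ : Fin (t+2) => Bool)) (a, rest)) i.succ)
        = (h a * M q0 q1 q2 a (rest 0)) *
            ∏ i : Fin t, M q0 q1 q2 (rest i.castSucc) (rest i.succ) := by
      intro a rest
      have hc0 : ((Fin.consEquiv (fun _ : Fin (t+2) => Bool)) (a, rest)) 0 = a := by simp [Fin.consEquiv]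
      have hcs : ∀ j : Fin (t+1), ((Fin.consEquiv (fun _ : Fin (t+2) => Bool)) (a, rest)) j.succ = rest j := by
        intro j
        simp [Fin.consEquiv]
      rw [Fin.prod_univ_succ]
      rw [hc0]
      have h1 : ((0 : Fin (t+1)).castSucc : Fin (t+2)) = 0 := rfl
      have h2 : ((Fin.consEquiv (fun _ : Fin (t+2) => Bool)) (a, rest)) ((0 : Fin (t+1)).succ) = rest 0 := hcs 0
      rw [h1, hc0, h2]
      
      have h3 : ∀ i : Fin t,
          M q0 q1 q2 (((Fin.consEquiv (fun _ : Fin (t+2) => Bool)) (a, rest)) (i.succ).castSucc) (((Fin.consEquiv (fun _ : Fin (t+2) => Bool)) (a, rest)) (i.succ).succ)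
            = M q0 q1 q2 (rest i.castSucc) (rest i.succ) := by
        intro i
        have hcast : (i.succ).castSucc = (i.castSucc).succ := by
          ext; simp
        rw [hcast, hcs i.castSucc, hcs i.succ]
      rw [Finset.prod_congr rfl (fun i _ => h3 i)]
      ring
    rw [Finset.sum_congr rfl (fun a _ => Finset.sum_congr rfl (fun rest _ => hterm a rest))]
    have hinner : ∀ a : Bool,
        ∑ rest : Fin (t+1) → Bool, (h a * M q0 q1 q2 a (rest 0)) *
          ∏ i : Fin t, M q0 q1 q2 (rest i.castSucc) (rest i.succ)
        = (h a * M q0 q1 q2 a false) * fr q0 q1 q2 t false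
          + (h a * M q0 q1 q2 a true) * fr q0 q1 q2 t true :=
      fun a => ih (fun b => h a * M q0 q1 q2 a b)
    rw [Fintype.sum_bool]
    rw [hinner true, hinner false]
    show _ = h false * fr q0 q1 q2 (t+1) false + h true * fr q0 q1 q2 (t+1) true
    simp only [fr]
    ring

include hq0 hq1 hq2 hq02 in
lemma signsum_bound (hq0pos : 0 < q0) (t : ℕ) :
    ∑ s_ : Fin (t+1) → Bool, ∏ i : Fin t, M q0 q1 q2 (s_ i.castSucc) (s_ i.succ)
      ≤ 2 * Real.sqrt (q2 / q0) * (q1 + Real.sqrt (q0 * q2))^t := by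
  have h := signsum_aux q0 q1 q2 t (fun _ => 1)
  simp only [one_mul] at h
  rw [h]
  have hle := fr_le q0 q1 q2 hq0 hq1 hq2 hq02 hq0pos t
  have hsq0 : 0 < Real.sqrt q0 := Real.sqrt_pos.2 hq0pos
  have hdiv : Real.sqrt (q2 / q0) = Real.sqrt q2 / Real.sqrt q0 := Real.sqrt_div hq2 q0
  calc fr q0 q1 q2 t false + fr q0 q1 q2 t true
      ≤ (q1 + Real.sqrt (q0 * q2))^t * vv q0 q2 false / Real.sqrt q0
        + (q1 + Real.sqrt (q0 * q2))^t * vv q0 q2 true / Real.sqrt q0 := by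
        exact add_le_add (hle false) (hle true)
    _ = (q1 + Real.sqrt (q0 * q2))^t * ((Real.sqrt q2 + Real.sqrt q0) / Real.sqrt q0) := by
        simp [vv]
        ring
    _ ≤ (q1 + Real.sqrt (q0 * q2))^t * ((2 * Real.sqrt q2) / Real.sqrt q0) := by
        refine mul_le_mul_of_nonneg_left ?_ (pow_nonneg (add_nonneg hq1 (Real.sqrt_nonneg _)) t)
        refine (div_le_div_iff_of_pos_right hsq0).2 ?_
        have := Real.sqrt_le_sqrt hq02
        linarith
    _ = 2 * Real.sqrt (q2 / q0) * (q1 + Real.sqrt (q0 * q2))^t := by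
        rw [hdiv]; ring

end Eig


lemma clauseProb_nonneg (q0 q1 q2 : ℝ) (h0 : 0 ≤ q0) (h1 : 0 ≤ q1) (h2 : 0 ≤ q2)
    (c : Clause n 2) : 0 ≤ clauseProb q0 q1 q2 c := by
  rcases clauseProb_cases q0 q1 q2 c with h | h | h <;> rw [h] <;> assumption

lemma clauseProb_le_one (q0 q1 q2 : ℝ) (h0 : q0 ≤ 1) (h1 : q1 ≤ 1) (h2 : q2 ≤ 1)
    (c : Clause n 2) : clauseProb q0 q1 q2 c ≤ 1 := by
  rcases clauseProb_cases q0 q1 q2 c with h | h | h <;> rw [h] <;> assumption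

lemma formulaWeight_nonneg (q0 q1 q2 : ℝ) (h00 : 0 ≤ q0) (h01 : q0 ≤ 1) (h10 : 0 ≤ q1)
    (h11 : q1 ≤ 1) (h20 : 0 ≤ q2) (h21 : q2 ≤ 1) (F : Finset (Clause n 2)) :
    0 ≤ formulaWeight q0 q1 q2 F := by
  apply mul_nonneg
  · exact Finset.prod_nonneg fun c _ => clauseProb_nonneg q0 q1 q2 h00 h10 h20 c
  · exact Finset.prod_nonneg fun c _ => by
      have := clauseProb_le_one q0 q1 q2 h01 h11 h21 c
      linarith

lemma mkCl_mem {F : Finset (Clause n 2)} {a b : Lit n} (h : ImpEdge F a b) (hv : a.1 ≠ b.1) :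
    mkCl a b hv ∈ F := by
  obtain ⟨-, c, hcF, hcc⟩ := edge_clause h
  have hc : c = mkCl a b hv := Subtype.ext (by rw [hcc, mkCl_carrier])
  rwa [← hc]

def yv {n t : ℕ} (x : Fin (t+2) → Fin n) (s_ : Fin (t+2) → Bool) (i : Fin (t+2)) : Lit n :=
  (x i, s_ i)

def Ev (F : Finset (Clause n 2)) (t : ℕ) (x : Fin (t+2) → Fin n) (s_ : Fin (t+2) → Bool)
    (a b : Fin (t+2)) (su sv : Bool) : Prop :=
  Function.Injective x ∧
  (∀ i : Fin (t+1), ImpEdge F (yv x s_ i.castSucc) (yv x s_ i.succ)) ∧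
  ImpEdge F ((x a, su)) (yv x s_ 0) ∧
  ImpEdge F (yv x s_ (Fin.last (t+1))) ((x b, sv)) ∧
  ({Lit.neg (x a, su), yv x s_ 0} : Finset (Lit n)) ≠
    {Lit.neg (yv x s_ (Fin.last (t+1))), (x b, sv)}

open scoped Classical in
lemma ev_bound (q0 q1 q2 qm : ℝ) (h00 : 0 ≤ q0) (h01 : q0 ≤ 1) (h10 : 0 ≤ q1) (h11 : q1 ≤ 1)
    (h20 : 0 ≤ q2) (h21 : q2 ≤ 1)
    (hqm : ∀ c : Clause n 2, clauseProb q0 q1 q2 c ≤ qm) (hqm0 : 0 ≤ qm)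
    (t : ℕ) (x : Fin (t+2) → Fin n) (s_ : Fin (t+2) → Bool) (a b : Fin (t+2)) (su sv : Bool) :
    ∑ F : Finset (Clause n 2), formulaWeight q0 q1 q2 F *
        (if Ev F t x s_ a b su sv then 1 else 0)
      ≤ qm^2 * ∏ i : Fin (t+1), M q0 q1 q2 (s_ i.castSucc) (s_ i.succ) := by
  classical
  have hM := M_nonneg q0 q1 q2 h00 h10 h20
  have hprod0 : 0 ≤ ∏ i : Fin (t+1), M q0 q1 q2 (s_ i.castSucc) (s_ i.succ) :=
    Finset.prod_nonneg fun i _ => hM _ _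
  by_cases hex : ∃ F₀, Ev F₀ t x s_ a b su sv
  · obtain ⟨F₀, hinj, hpath, huE, hvE, hclne⟩ := hex
    have hvp : ∀ i : Fin (t+1), (yv x s_ i.castSucc).1 ≠ (yv x s_ i.succ).1 := by
      intro i heq
      have h1 : i.castSucc = i.succ := hinj heq
      have := congrArg Fin.val h1
      simp at this
    have hvu : ((x a, su) : Lit n).1 ≠ (yv x s_ 0).1 := edge_vars (huE)
    have hvv2 : (yv x s_ (Fin.last (t+1))).1 ≠ ((x b, sv) : Lit n).1 := edge_vars (hvE)
    set uC := mkCl (x a, su) (yv x s_ 0) hvu with huC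
    set vC := mkCl (yv x s_ (Fin.last (t+1))) (x b, sv) hvv2 with hvC
    set pS := Finset.image
      (fun i : Fin (t+1) => mkCl (yv x s_ i.castSucc) (yv x s_ i.succ) (hvp i))
      Finset.univ with hpS
    have hnegne : ∀ i : Fin (t+1), Lit.neg (yv x s_ i.castSucc) ≠ yv x s_ i.succ := by
      intro i hh
      exact hvp i (by rw [← hh, neg_fst])
    have hD1 : ∀ i j : Fin (t+1),
        mkCl (yv x s_ i.castSucc) (yv x s_ i.succ) (hvp i)
          = mkCl (yv x s_ j.castSucc) (yv x s_ j.succ) (hvp j) → i = j := by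
      intro i j hij
      have hcar := congrArg (fun c : Clause n 2 => c.1) hij
      simp only [mkCl_carrier] at hcar
      rcases pair_eq_pair hcar (hnegne i) with ⟨hA, hB⟩ | ⟨hA, hB⟩
      · have h2 : x i.succ = x j.succ := congrArg Prod.fst hB
        exact Fin.succ_injective _ (hinj h2)
      · exfalso
        have h1 : x i.castSucc = x j.succ := congrArg Prod.fst hA
        have h2 : x i.succ = x j.castSucc := congrArg Prod.fst hB
        have e1 := congrArg Fin.val (hinj h1)
        have e2 := congrArg Fin.val (hinj h2)
        simp at e1 e2
        omega
    have hD2 : uC ∉ pS := by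
      rw [hpS, Finset.mem_image]
      rintro ⟨j, -, hj⟩
      have hcar := congrArg (fun c : Clause n 2 => c.1) hj
      simp only [huC, mkCl_carrier] at hcar
      rcases pair_eq_pair hcar (hnegne j) with ⟨hA, hB⟩ | ⟨hA, hB⟩
      · have h2 : x j.succ = x 0 := congrArg Prod.fst hB
        exact Fin.succ_ne_zero j (hinj h2)
      · have h1 : x j.castSucc = x 0 := congrArg Prod.fst hA
        have h0 : j.castSucc = 0 := hinj h1
        rw [h0] at hA
        have := congrArg Prod.snd hA
        simp [Lit.neg, yv] at this
    have hD3 : vC ∉ pS := by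
      rw [hpS, Finset.mem_image]
      rintro ⟨j, -, hj⟩
      have hcar := congrArg (fun c : Clause n 2 => c.1) hj
      simp only [hvC, mkCl_carrier] at hcar
      rcases pair_eq_pair hcar (hnegne j) with ⟨hA, hB⟩ | ⟨hA, hB⟩
      · have h1 : x j.castSucc = x (Fin.last (t+1)) := congrArg Prod.fst hA
        have h0 := congrArg Fin.val (hinj h1)
        simp [Fin.last] at h0
        omega
      · have h2 : x j.succ = x (Fin.last (t+1)) := congrArg Prod.fst hB
        have h0 : j.succ = Fin.last (t+1) := hinj h2
        rw [h0] at hB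
        have := congrArg Prod.snd hB
        simp [Lit.neg, yv] at this
    have hD4 : uC ≠ vC := by
      intro hh
      apply hclne
      have := congrArg (fun c : Clause n 2 => c.1) hh
      simp only [huC, hvC, mkCl_carrier] at this
      exact this
    set S := insert uC (insert vC pS) with hS
    have hsub : ∀ F : Finset (Clause n 2), Ev F t x s_ a b su sv → S ⊆ F := by
      intro F hEv
      obtain ⟨-, hpath', huE', hvE', -⟩ := hEv
      intro c hc
      rw [hS, Finset.mem_insert, Finset.mem_insert] at hc
      rcases hc with rfl | rfl | hc
      · exact mkCl_mem huE' hvu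
      · exact mkCl_mem hvE' hvv2
      · rw [hpS, Finset.mem_image] at hc
        obtain ⟨j, -, rfl⟩ := hc
        exact mkCl_mem (hpath' j) (hvp j)
    have hw0 := formulaWeight_nonneg q0 q1 q2 h00 h01 h10 h11 h20 h21 (n := n)
    have hstep : ∑ F : Finset (Clause n 2), formulaWeight q0 q1 q2 F *
          (if Ev F t x s_ a b su sv then 1 else 0)
        ≤ ∑ F : Finset (Clause n 2), formulaWeight q0 q1 q2 F * (if S ⊆ F then 1 else 0) := by
      refine Finset.sum_le_sum fun F _ => ?_
      by_cases hEv : Ev F t x s_ a b su sv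
      · rw [if_pos hEv, if_pos (hsub F hEv)]
      · rw [if_neg hEv, mul_zero]
        refine mul_nonneg (hw0 F) ?_
        split <;> norm_num
    refine le_trans hstep ?_
    rw [sum_weight_superset]
    have hcp0 := clauseProb_nonneg q0 q1 q2 h00 h10 h20 (n := n)
    have hprodpS : ∏ c ∈ pS, clauseProb q0 q1 q2 c
        = ∏ i : Fin (t+1), M q0 q1 q2 (s_ i.castSucc) (s_ i.succ) := by
      rw [hpS, Finset.prod_image (fun i _ j _ h => hD1 i j h)]
      exact Finset.prod_congr rfl fun i _ => clauseProb_mkCl q0 q1 q2 (hvp i)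
    have hSprod : ∏ c ∈ S, clauseProb q0 q1 q2 c
        = clauseProb q0 q1 q2 uC *
          (clauseProb q0 q1 q2 vC * ∏ i : Fin (t+1), M q0 q1 q2 (s_ i.castSucc) (s_ i.succ)) := by
      rw [hS, Finset.prod_insert (by
        rw [Finset.mem_insert]
        rintro (h | h)
        · exact hD4 h
        · exact hD2 h), Finset.prod_insert hD3, hprodpS]
    rw [hSprod]
    have h1 : clauseProb q0 q1 q2 uC ≤ qm := hqm uC
    have h2 : clauseProb q0 q1 q2 vC ≤ qm := hqm vC
    have h3 : clauseProb q0 q1 q2 vC *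
        ∏ i : Fin (t+1), M q0 q1 q2 (s_ i.castSucc) (s_ i.succ)
        ≤ qm * ∏ i : Fin (t+1), M q0 q1 q2 (s_ i.castSucc) (s_ i.succ) :=
      mul_le_mul_of_nonneg_right h2 hprod0
    calc clauseProb q0 q1 q2 uC * (clauseProb q0 q1 q2 vC * _)
        ≤ qm * (qm * ∏ i : Fin (t+1), M q0 q1 q2 (s_ i.castSucc) (s_ i.succ)) := by
          refine mul_le_mul h1 ?_ ?_ hqm0
          · exact le_trans h3 (le_refl _)
          · exact mul_nonneg (hcp0 vC) hprod0
      _ = qm^2 * ∏ i : Fin (t+1), M q0 q1 q2 (s_ i.castSucc) (s_ i.succ) := by ring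
  · have hzero : ∀ F : Finset (Clause n 2),
        (if Ev F t x s_ a b su sv then (1:ℝ) else 0) = 0 :=
      fun F => if_neg (fun h => hex ⟨F, h⟩)
    simp only [hzero, mul_zero, Finset.sum_const_zero]
    exact mul_nonneg (sq_nonneg qm) hprod0



lemma ev_exists {F : Finset (Clause n 2)} (hunsat : ¬ ∃ σ, SatF σ F) :
    ∃ t, t < n ∧ ∃ x s_ a b su sv, Ev F t x s_ a b su sv := by
  obtain ⟨T, w, u, v, ju, jv, hT2, hTn, hwinj, hpath, hjut, hjueq, hjvt, hjveq, huE, hvE,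
    hclne⟩ := cert_exists hunsat
  obtain ⟨t, rfl⟩ : ∃ t, T = t + 2 := ⟨T - 2, by omega⟩
  have htn : t < n := by omega
  refine ⟨t, htn, fun i => (w i.1).1, fun i => (w i.1).2, ⟨ju, by omega⟩, ⟨jv, by omega⟩,
    u.2, v.2, ?_, ?_, ?_, ?_, ?_⟩
  · intro i j hij
    exact Fin.ext (hwinj i.1 j.1 i.2 j.2 hij)
  · intro i
    have : yv (fun i : Fin (t+2) => (w i.1).1) (fun i => (w i.1).2) i.castSucc = w i.1 := rfl
    rw [this]
    have h2 : yv (fun i : Fin (t+2) => (w i.1).1) (fun i => (w i.1).2) i.succ = w (i.1+1) := rfl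
    rw [h2]
    exact hpath i.1 (by have := i.2; omega)
  · have hu : (((w ju).1, u.2) : Lit n) = u := by rw [← hjueq]
    have h0 : yv (fun i : Fin (t+2) => (w i.1).1) (fun i => (w i.1).2) 0 = w 0 := rfl
    show ImpEdge F (((w ju).1, u.2) : Lit n) _
    rw [hu, h0]
    exact huE
  · have hv : (((w jv).1, v.2) : Lit n) = v := by rw [← hjveq]
    have hl : yv (fun i : Fin (t+2) => (w i.1).1) (fun i => (w i.1).2) (Fin.last (t+1))
        = w (t+2-1) := rfl
    show ImpEdge F _ (((w jv).1, v.2) : Lit n)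
    rw [hv, hl]
    exact hvE
  · have hu : (((w ju).1, u.2) : Lit n) = u := by rw [← hjueq]
    have hv : (((w jv).1, v.2) : Lit n) = v := by rw [← hjveq]
    have h0 : yv (fun i : Fin (t+2) => (w i.1).1) (fun i => (w i.1).2) 0 = w 0 := rfl
    have hl : yv (fun i : Fin (t+2) => (w i.1).1) (fun i => (w i.1).2) (Fin.last (t+1))
        = w (t+2-1) := rfl
    show ({Lit.neg (((w ju).1, u.2) : Lit n), _} : Finset (Lit n)) ≠ _
    rw [hu, hv, h0, hl]
    exact hclne



open scoped Classical in
lemma count_bound (q0 q1 q2 qm : ℝ) (h00 : 0 ≤ q0) (h01 : q0 ≤ 1) (h10 : 0 ≤ q1) (h11 : q1 ≤ 1)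
    (h20 : 0 ≤ q2) (h21 : q2 ≤ 1)
    (hqm : ∀ c : Clause n 2, clauseProb q0 q1 q2 c ≤ qm) (hqm0 : 0 ≤ qm)
    (hq0pos : 0 < q0) (hq02 : q0 ≤ q2) (t : ℕ) :
    ∑ x : Fin (t+2) → Fin n, ∑ s_ : Fin (t+2) → Bool, ∑ a : Fin (t+2), ∑ b : Fin (t+2),
      ∑ su : Bool, ∑ sv : Bool,
        (∑ F : Finset (Clause n 2), formulaWeight q0 q1 q2 F *
          (if Ev F t x s_ a b su sv then 1 else 0))
      ≤ (n:ℝ)^(t+2) * ((4 * ((t:ℝ)+2)^2) *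
          (qm^2 * (2 * Real.sqrt (q2/q0) * (q1 + Real.sqrt (q0*q2))^(t+1)))) := by
  have hM := M_nonneg q0 q1 q2 h00 h10 h20
  have hPP0 : ∀ s_ : Fin (t+2) → Bool,
      0 ≤ ∏ i : Fin (t+1), M q0 q1 q2 (s_ i.castSucc) (s_ i.succ) :=
    fun s_ => Finset.prod_nonneg fun i _ => hM _ _
  have hstep1 : ∀ (x : Fin (t+2) → Fin n) (s_ : Fin (t+2) → Bool),
      ∑ a : Fin (t+2), ∑ b : Fin (t+2), ∑ su : Bool, ∑ sv : Bool,
        (∑ F : Finset (Clause n 2), formulaWeight q0 q1 q2 F *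
          (if Ev F t x s_ a b su sv then 1 else 0))
      ≤ (4 * ((t:ℝ)+2)^2) *
          (qm^2 * ∏ i : Fin (t+1), M q0 q1 q2 (s_ i.castSucc) (s_ i.succ)) := by
    intro x s_
    calc ∑ a : Fin (t+2), ∑ b : Fin (t+2), ∑ su : Bool, ∑ sv : Bool,
        (∑ F : Finset (Clause n 2), formulaWeight q0 q1 q2 F *
          (if Ev F t x s_ a b su sv then 1 else 0))
        ≤ ∑ _a : Fin (t+2), ∑ _b : Fin (t+2), ∑ _su : Bool, ∑ _sv : Bool,
            (qm^2 * ∏ i : Fin (t+1), M q0 q1 q2 (s_ i.castSucc) (s_ i.succ)) := by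
          refine Finset.sum_le_sum fun a _ => Finset.sum_le_sum fun b _ =>
            Finset.sum_le_sum fun su _ => Finset.sum_le_sum fun sv _ => ?_
          exact ev_bound q0 q1 q2 qm h00 h01 h10 h11 h20 h21 hqm hqm0 t x s_ a b su sv
      _ = (4 * ((t:ℝ)+2)^2) *
            (qm^2 * ∏ i : Fin (t+1), M q0 q1 q2 (s_ i.castSucc) (s_ i.succ)) := by
          simp only [Finset.sum_const, Finset.card_univ, Fintype.card_fin, Fintype.card_bool,
            nsmul_eq_mul]
          push_cast
          ring
  calc ∑ x : Fin (t+2) → Fin n, ∑ s_ : Fin (t+2) → Bool, ∑ a : Fin (t+2), ∑ b : Fin (t+2),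
      ∑ su : Bool, ∑ sv : Bool,
        (∑ F : Finset (Clause n 2), formulaWeight q0 q1 q2 F *
          (if Ev F t x s_ a b su sv then 1 else 0))
      ≤ ∑ x : Fin (t+2) → Fin n, ((4 * ((t:ℝ)+2)^2) *
          (qm^2 * ∑ s_ : Fin (t+2) → Bool,
            ∏ i : Fin (t+1), M q0 q1 q2 (s_ i.castSucc) (s_ i.succ))) := by
        refine Finset.sum_le_sum fun x _ => ?_
        rw [Finset.mul_sum, Finset.mul_sum]
        exact Finset.sum_le_sum fun s_ _ => by
          have := hstep1 x s_
          calc ∑ a : Fin (t+2), ∑ b : Fin (t+2), ∑ su : Bool, ∑ sv : Bool,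
              (∑ F : Finset (Clause n 2), formulaWeight q0 q1 q2 F *
                (if Ev F t x s_ a b su sv then 1 else 0)) ≤ _ := hstep1 x s_
            _ = (4 * ((t:ℝ)+2)^2) *
                (qm^2 * ∏ i : Fin (t+1), M q0 q1 q2 (s_ i.castSucc) (s_ i.succ)) := rfl
    _ ≤ ∑ _x : Fin (t+2) → Fin n, ((4 * ((t:ℝ)+2)^2) *
          (qm^2 * (2 * Real.sqrt (q2/q0) * (q1 + Real.sqrt (q0*q2))^(t+1)))) := by
        refine Finset.sum_le_sum fun x _ => ?_
        have hs := signsum_bound q0 q1 q2 h00 h10 h20 hq02 hq0pos (t+1)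
        refine mul_le_mul_of_nonneg_left ?_ (by positivity)
        exact mul_le_mul_of_nonneg_left hs (sq_nonneg qm)
    _ = (n:ℝ)^(t+2) * ((4 * ((t:ℝ)+2)^2) *
          (qm^2 * (2 * Real.sqrt (q2/q0) * (q1 + Real.sqrt (q0*q2))^(t+1)))) := by
        rw [Finset.sum_const, Finset.card_univ]
        simp only [Fintype.card_fun, Fintype.card_fin, nsmul_eq_mul]
        push_cast
        ring



open scoped Classical in


open scoped Classical in
lemma unsat_le (q0 q1 q2 qm : ℝ) (h00 : 0 ≤ q0) (h01 : q0 ≤ 1) (h10 : 0 ≤ q1) (h11 : q1 ≤ 1)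
    (h20 : 0 ≤ q2) (h21 : q2 ≤ 1)
    (hqm : ∀ c : Clause n 2, clauseProb q0 q1 q2 c ≤ qm) (hqm0 : 0 ≤ qm)
    (hq0pos : 0 < q0) (hq02 : q0 ≤ q2) :
    ∑ F : Finset (Clause n 2), formulaWeight q0 q1 q2 F * (if ∃ σ, SatF σ F then 0 else 1)
      ≤ ∑ t ∈ Finset.range n, (n:ℝ)^(t+2) * ((4 * ((t:ℝ)+2)^2) *
          (qm^2 * (2 * Real.sqrt (q2/q0) * (q1 + Real.sqrt (q0*q2))^(t+1)))) := by
  have hw0 := formulaWeight_nonneg q0 q1 q2 h00 h01 h10 h11 h20 h21 (n := n)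
  have hind0 : ∀ (P : Prop), (0:ℝ) ≤ (if P then (1:ℝ) else 0) := by
    intro P; split <;> norm_num
  have hN1 : ∀ (F : Finset (Clause n 2)) (t : ℕ) (x : Fin (t+2) → Fin n) (s_ : Fin (t+2) → Bool) (a b : Fin (t+2)) (su : Bool), (0:ℝ) ≤ ∑ sv : Bool, (if Ev F t x s_ a b su sv then (1:ℝ) else 0) :=
    fun F t x s_ a b su => Finset.sum_nonneg fun sv _ => hind0 _
  have hN2 : ∀ (F : Finset (Clause n 2)) (t : ℕ) (x : Fin (t+2) → Fin n) (s_ : Fin (t+2) → Bool) (a b : Fin (t+2)), (0:ℝ) ≤ ∑ su : Bool, ∑ sv : Bool,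
      (if Ev F t x s_ a b su sv then (1:ℝ) else 0) :=
    fun F t x s_ a b => Finset.sum_nonneg fun su _ => hN1 F t x s_ a b su
  have hN3 : ∀ (F : Finset (Clause n 2)) (t : ℕ) (x : Fin (t+2) → Fin n) (s_ : Fin (t+2) → Bool) (a : Fin (t+2)), (0:ℝ) ≤ ∑ b : Fin (t+2), ∑ su : Bool, ∑ sv : Bool,
      (if Ev F t x s_ a b su sv then (1:ℝ) else 0) :=
    fun F t x s_ a => Finset.sum_nonneg fun b _ => hN2 F t x s_ a b
  have hN4 : ∀ (F : Finset (Clause n 2)) (t : ℕ) (x : Fin (t+2) → Fin n) (s_ : Fin (t+2) → Bool), (0:ℝ) ≤ ∑ a : Fin (t+2), ∑ b : Fin (t+2), ∑ su : Bool, ∑ sv : Bool,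
      (if Ev F t x s_ a b su sv then (1:ℝ) else 0) :=
    fun F t x s_ => Finset.sum_nonneg fun a _ => hN3 F t x s_ a
  have hN5 : ∀ (F : Finset (Clause n 2)) (t : ℕ) (x : Fin (t+2) → Fin n), (0:ℝ) ≤ ∑ s_ : Fin (t+2) → Bool, ∑ a : Fin (t+2), ∑ b : Fin (t+2),
      ∑ su : Bool, ∑ sv : Bool, (if Ev F t x s_ a b su sv then (1:ℝ) else 0) :=
    fun F t x => Finset.sum_nonneg fun s_ _ => hN4 F t x s_
  have hN6 : ∀ (F : Finset (Clause n 2)) (t : ℕ), (0:ℝ) ≤ ∑ x : Fin (t+2) → Fin n, ∑ s_ : Fin (t+2) → Bool, ∑ a : Fin (t+2),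
      ∑ b : Fin (t+2), ∑ su : Bool, ∑ sv : Bool,
      (if Ev F t x s_ a b su sv then (1:ℝ) else 0) :=
    fun F t => Finset.sum_nonneg fun x _ => hN5 F t x
  have hpoint : ∀ F : Finset (Clause n 2), (if ∃ σ, SatF σ F then (0:ℝ) else 1) ≤
      ∑ t ∈ Finset.range n, ∑ x : Fin (t+2) → Fin n, ∑ s_ : Fin (t+2) → Bool,
        ∑ a : Fin (t+2), ∑ b : Fin (t+2), ∑ su : Bool, ∑ sv : Bool,
          (if Ev F t x s_ a b su sv then (1:ℝ) else 0) := by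
    intro F
    by_cases hFs : ∃ σ, SatF σ F
    · rw [if_pos hFs]
      exact Finset.sum_nonneg fun t _ => hN6 F t
    · rw [if_neg hFs]
      obtain ⟨t, htn, x, s_, a, b, su, sv, hEv⟩ := ev_exists hFs
      have c1 : (1:ℝ) ≤ ∑ sv' : Bool, (if Ev F t x s_ a b su sv' then (1:ℝ) else 0) := by
        have h := Finset.single_le_sum
          (f := fun sv' => if Ev F t x s_ a b su sv' then (1:ℝ) else 0)
          (fun i _ => hind0 _) (Finset.mem_univ sv)
        beta_reduce at h
        rwa [if_pos hEv] at h
      have c2 : (1:ℝ) ≤ ∑ su' : Bool, ∑ sv' : Bool,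
          (if Ev F t x s_ a b su' sv' then (1:ℝ) else 0) :=
        le_trans c1 (Finset.single_le_sum
          (f := fun su' => ∑ sv' : Bool, (if Ev F t x s_ a b su' sv' then (1:ℝ) else 0))
          (fun i _ => hN1 F t x s_ a b i) (Finset.mem_univ su))
      have c3 : (1:ℝ) ≤ ∑ b' : Fin (t+2), ∑ su' : Bool, ∑ sv' : Bool,
          (if Ev F t x s_ a b' su' sv' then (1:ℝ) else 0) :=
        le_trans c2 (Finset.single_le_sum
          (f := fun b' => ∑ su' : Bool, ∑ sv' : Bool,
            (if Ev F t x s_ a b' su' sv' then (1:ℝ) else 0))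
          (fun i _ => hN2 F t x s_ a i) (Finset.mem_univ b))
      have c4 : (1:ℝ) ≤ ∑ a' : Fin (t+2), ∑ b' : Fin (t+2), ∑ su' : Bool, ∑ sv' : Bool,
          (if Ev F t x s_ a' b' su' sv' then (1:ℝ) else 0) :=
        le_trans c3 (Finset.single_le_sum
          (f := fun a' => ∑ b' : Fin (t+2), ∑ su' : Bool, ∑ sv' : Bool,
            (if Ev F t x s_ a' b' su' sv' then (1:ℝ) else 0))
          (fun i _ => hN3 F t x s_ i) (Finset.mem_univ a))
      have c5 : (1:ℝ) ≤ ∑ s_' : Fin (t+2) → Bool, ∑ a' : Fin (t+2), ∑ b' : Fin (t+2),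
          ∑ su' : Bool, ∑ sv' : Bool,
          (if Ev F t x s_' a' b' su' sv' then (1:ℝ) else 0) :=
        le_trans c4 (Finset.single_le_sum
          (f := fun s_' => ∑ a' : Fin (t+2), ∑ b' : Fin (t+2), ∑ su' : Bool, ∑ sv' : Bool,
            (if Ev F t x s_' a' b' su' sv' then (1:ℝ) else 0))
          (fun i _ => hN4 F t x i) (Finset.mem_univ s_))
      have c6 : (1:ℝ) ≤ ∑ x' : Fin (t+2) → Fin n, ∑ s_' : Fin (t+2) → Bool, ∑ a' : Fin (t+2),
          ∑ b' : Fin (t+2), ∑ su' : Bool, ∑ sv' : Bool,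
          (if Ev F t x' s_' a' b' su' sv' then (1:ℝ) else 0) :=
        le_trans c5 (Finset.single_le_sum
          (f := fun x' => ∑ s_' : Fin (t+2) → Bool, ∑ a' : Fin (t+2), ∑ b' : Fin (t+2),
            ∑ su' : Bool, ∑ sv' : Bool,
            (if Ev F t x' s_' a' b' su' sv' then (1:ℝ) else 0))
          (fun i _ => hN5 F t i) (Finset.mem_univ x))
      exact le_trans c6 (Finset.single_le_sum
        (f := fun t' => ∑ x' : Fin (t'+2) → Fin n, ∑ s_' : Fin (t'+2) → Bool, ∑ a' : Fin (t'+2),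
          ∑ b' : Fin (t'+2), ∑ su' : Bool, ∑ sv' : Bool,
          (if Ev F t' x' s_' a' b' su' sv' then (1:ℝ) else 0))
        (fun i _ => hN6 F i) (Finset.mem_range.2 htn))
  have swapm : ∀ {α β : Type} (s : Finset α) (tt : Finset β) (f : α → ℝ) (g : α → β → ℝ),
      ∑ a ∈ s, f a * ∑ b ∈ tt, g a b = ∑ b ∈ tt, ∑ a ∈ s, f a * g a b := by
    intro α β s tt f g
    simp_rw [Finset.mul_sum]
    exact Finset.sum_comm
  calc ∑ F : Finset (Clause n 2), formulaWeight q0 q1 q2 F * (if ∃ σ, SatF σ F then 0 else 1)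
      ≤ ∑ F : Finset (Clause n 2), formulaWeight q0 q1 q2 F *
          (∑ t ∈ Finset.range n, ∑ x : Fin (t+2) → Fin n, ∑ s_ : Fin (t+2) → Bool,
            ∑ a : Fin (t+2), ∑ b : Fin (t+2), ∑ su : Bool, ∑ sv : Bool,
              (if Ev F t x s_ a b su sv then (1:ℝ) else 0)) := by
        exact Finset.sum_le_sum fun F _ => mul_le_mul_of_nonneg_left (hpoint F) (hw0 F)
    _ = ∑ t ∈ Finset.range n, ∑ x : Fin (t+2) → Fin n, ∑ s_ : Fin (t+2) → Bool,
          ∑ a : Fin (t+2), ∑ b : Fin (t+2), ∑ su : Bool, ∑ sv : Bool,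
            (∑ F : Finset (Clause n 2), formulaWeight q0 q1 q2 F *
              (if Ev F t x s_ a b su sv then 1 else 0)) := by
        rw [swapm]
        refine Finset.sum_congr rfl fun t _ => ?_
        rw [swapm]
        refine Finset.sum_congr rfl fun x _ => ?_
        rw [swapm]
        refine Finset.sum_congr rfl fun s_ _ => ?_
        rw [swapm]
        refine Finset.sum_congr rfl fun a _ => ?_
        rw [swapm]
        refine Finset.sum_congr rfl fun b _ => ?_
        rw [swapm]
        refine Finset.sum_congr rfl fun su _ => ?_
        rw [swapm]
    _ ≤ _ := Finset.sum_le_sum fun t _ =>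
        count_bound q0 q1 q2 qm h00 h01 h10 h11 h20 h21 hqm hqm0 hq0pos hq02 t

open scoped Classical in
lemma sat_bounds (q0 q1 q2 qm : ℝ) (h00 : 0 ≤ q0) (h01 : q0 ≤ 1) (h10 : 0 ≤ q1) (h11 : q1 ≤ 1)
    (h20 : 0 ≤ q2) (h21 : q2 ≤ 1)
    (hqm : ∀ c : Clause n 2, clauseProb q0 q1 q2 c ≤ qm) (hqm0 : 0 ≤ qm)
    (hq0pos : 0 < q0) (hq02 : q0 ≤ q2) :
    1 - (∑ t ∈ Finset.range n, (n:ℝ)^(t+2) * ((4 * ((t:ℝ)+2)^2) *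
          (qm^2 * (2 * Real.sqrt (q2/q0) * (q1 + Real.sqrt (q0*q2))^(t+1)))))
      ≤ ∑ F : Finset (Clause n 2), formulaWeight q0 q1 q2 F * (if ∃ σ, SatF σ F then 1 else 0)
    ∧ ∑ F : Finset (Clause n 2), formulaWeight q0 q1 q2 F * (if ∃ σ, SatF σ F then 1 else 0)
        ≤ 1 := by
  have hw0 := formulaWeight_nonneg q0 q1 q2 h00 h01 h10 h11 h20 h21 (n := n)
  constructor
  · have hid : ∀ F : Finset (Clause n 2),
        formulaWeight q0 q1 q2 F * (if ∃ σ, SatF σ F then (1:ℝ) else 0)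
          = formulaWeight q0 q1 q2 F -
            formulaWeight q0 q1 q2 F * (if ∃ σ, SatF σ F then 0 else 1) := by
      intro F
      by_cases h : ∃ σ, SatF σ F <;> simp [h]
    rw [Finset.sum_congr rfl (fun F _ => hid F), Finset.sum_sub_distrib, sum_formulaWeight]
    have h := unsat_le q0 q1 q2 qm h00 h01 h10 h11 h20 h21 hqm hqm0 hq0pos hq02
    linarith
  · calc ∑ F : Finset (Clause n 2), formulaWeight q0 q1 q2 F *
          (if ∃ σ, SatF σ F then (1:ℝ) else 0)
        ≤ ∑ F : Finset (Clause n 2), formulaWeight q0 q1 q2 F := by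
          refine Finset.sum_le_sum fun F _ => ?_
          by_cases h : ∃ σ, SatF σ F
          · rw [if_pos h, mul_one]
          · rw [if_neg h, mul_zero]
            exact hw0 F
      _ = 1 := sum_formulaWeight q0 q1 q2


end TwoSat

end RS

open scoped Classical in
/-- Fix `p0, p1, p2 > 0` with `p0 ≤ p2`, `ε > 0` and `0 < r ≤ 1/(p1 + 2√(p0 p2)) - ε`.
The random 2-CNF formula on `n` variables where each clause with two positive literals is
present independently with probability `q2 = 2 p2 r / n`, each clause with one positive
literal with probability `q1 = p1 r / n`, and each clause with two negative literals with
probability `q0 = 2 p0 r / n`, is satisfiable with probability tending to `1` as `n → ∞`. -/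
theorem random_2cnf_satisfiable_whp (p0 p1 p2 ε r : ℝ)
    (hp0 : 0 < p0) (hp1 : 0 < p1) (hp2 : 0 < p2) (hp02 : p0 ≤ p2) (hε : 0 < ε)
    (hr : 0 < r) (hrle : r ≤ 1 / (p1 + 2 * Real.sqrt (p0 * p2)) - ε) :
    Filter.Tendsto (fun n : ℕ =>
        ∑ F : Finset (Clause n 2),
          formulaWeight (2 * p0 * r / n) (p1 * r / n) (2 * p2 * r / n) F *
            (if ∃ σ : Fin n → Bool, SatF σ F then (1 : ℝ) else 0))
      Filter.atTop (nhds 1) := by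
  classical
  set Λ : ℝ := p1 + 2 * Real.sqrt (p0 * p2) with hΛdef
  have hΛ : 0 < Λ := by positivity
  have hεΛ : ε * Λ < 1 := by
    have h1 : ε < 1 / Λ := by linarith
    calc ε * Λ < (1 / Λ) * Λ := by exact mul_lt_mul_of_pos_right h1 hΛ
      _ = 1 := by field_simp
  set δ : ℝ := ε * Λ with hδdef
  have hδ0 : 0 < δ := mul_pos hε hΛ
  have hrΛ : r * Λ ≤ 1 - δ := by
    have h := mul_le_mul_of_nonneg_right hrle (le_of_lt hΛ)
    have h2 : (1 / Λ - ε) * Λ = 1 - δ := by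
      field_simp
      ring
    exact le_of_le_of_eq h h2
  set c : ℝ := r * max p1 (2 * p2) with hcdef
  have hc0 : 0 < c := mul_pos hr (lt_max_iff.2 (Or.inl hp1))
  set y : ℝ := 1 - δ with hydef
  have hy0 : 0 ≤ y := by
    have : 0 < r * Λ := mul_pos hr hΛ
    linarith
  have hy1 : y < 1 := by
    rw [hydef]
    linarith
  have hsum : Summable (fun t : ℕ => ((t:ℝ)+2)^2 * y^(t+1)) := by
    have hnorm : ‖y‖ < 1 := by rw [Real.norm_eq_abs, abs_of_nonneg hy0]; exact hy1
    have h2 := summable_pow_mul_geometric_of_norm_lt_one (k := 2) (r := y) hnorm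
    have h1 := summable_pow_mul_geometric_of_norm_lt_one (k := 1) (r := y) hnorm
    have h0 := summable_geometric_of_norm_lt_one hnorm
    have heq : (fun t : ℕ => ((t:ℝ)+2)^2 * y^(t+1))
        = fun t : ℕ => y * ((t:ℝ)^2 * y^t) + ((4*y) * ((t:ℝ)^1 * y^t) + (4*y) * y^t) := by
      funext t
      ring
    rw [heq]
    exact ((h2.mul_left y).add ((h1.mul_left (4*y)).add (h0.mul_left (4*y))))
  set C0 : ℝ := ∑' t : ℕ, ((t:ℝ)+2)^2 * y^(t+1) with hC0def
  have hC0nn : 0 ≤ C0 := tsum_nonneg fun t => by positivity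
  set sq : ℝ := Real.sqrt (p2 / p0) with hsqdef
  have hsq0 : 0 ≤ sq := Real.sqrt_nonneg _
  set K : ℝ := 8 * sq * c^2 * C0 with hKdef
  have hbound : ∀ᶠ (n : ℕ) in Filter.atTop,
      1 - K / n ≤ (∑ F : Finset (Clause n 2),
          formulaWeight (2 * p0 * r / n) (p1 * r / n) (2 * p2 * r / n) F *
            (if ∃ σ : Fin n → Bool, SatF σ F then (1 : ℝ) else 0))
      ∧ (∑ F : Finset (Clause n 2),
          formulaWeight (2 * p0 * r / n) (p1 * r / n) (2 * p2 * r / n) F *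
            (if ∃ σ : Fin n → Bool, SatF σ F then (1 : ℝ) else 0)) ≤ 1 := by
    rw [Filter.eventually_atTop]
    refine ⟨⌈c⌉₊ + 1, fun n hn => ?_⟩
    have hn1 : 1 ≤ n := by omega
    have hn0 : (0:ℝ) < n := by
      have : (1:ℝ) ≤ (n:ℝ) := by exact_mod_cast hn1
      linarith
    have hcn : c ≤ (n:ℝ) := by
      have h1 : c ≤ (⌈c⌉₊ : ℝ) := Nat.le_ceil c
      have h2 : (⌈c⌉₊ : ℝ) ≤ (n:ℝ) := by
        have : ⌈c⌉₊ ≤ n := by omega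
        exact_mod_cast this
      linarith
    set q0 : ℝ := 2 * p0 * r / n with hq0def
    set q1 : ℝ := p1 * r / n with hq1def
    set q2 : ℝ := 2 * p2 * r / n with hq2def
    have hq0pos : 0 < q0 := by rw [hq0def]; positivity
    have h10 : 0 ≤ q1 := by rw [hq1def]; positivity
    have h20 : 0 ≤ q2 := by rw [hq2def]; positivity
    have hq02 : q0 ≤ q2 := by
      rw [hq0def, hq2def]
      gcongr
    have hq1m : q1 ≤ c / n := by
      rw [hq1def, hcdef]
      have hnum : p1 * r ≤ r * max p1 (2*p2) := by
        rw [mul_comm]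
        exact mul_le_mul_of_nonneg_left (le_max_left _ _) (le_of_lt hr)
      exact (div_le_div_iff_of_pos_right hn0).2 hnum
    have hq2m : q2 ≤ c / n := by
      rw [hq2def, hcdef]
      have hnum : 2 * p2 * r ≤ r * max p1 (2*p2) := by
        rw [mul_comm]
        exact mul_le_mul_of_nonneg_left (le_max_right _ _) (le_of_lt hr)
      exact (div_le_div_iff_of_pos_right hn0).2 hnum
    have hq0m : q0 ≤ c / n := le_trans hq02 hq2m
    have hcn1 : c / n ≤ 1 := by
      rw [div_le_one hn0]
      exact hcn
    have hqm : ∀ cc : Clause n 2, clauseProb q0 q1 q2 cc ≤ c / n := by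
      intro cc
      rcases RS.clauseProb_cases q0 q1 q2 cc with h | h | h <;> rw [h] <;> assumption
    have hB := RS.sat_bounds q0 q1 q2 (c/n) (le_of_lt hq0pos) (le_trans hq0m hcn1) h10
      (le_trans hq1m hcn1) h20 (le_trans hq2m hcn1) hqm (by positivity) hq0pos hq02
    have hsqeq : Real.sqrt (q2 / q0) = sq := by
      rw [hsqdef]
      congr 1
      rw [hq2def, hq0def]
      field_simp
    have hρeq : q1 + Real.sqrt (q0 * q2) = r * Λ / n := by
      have hq0q2 : q0 * q2 = (2*r/n)^2 * (p0 * p2) := by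
        rw [hq0def, hq2def]
        ring
      rw [hq0q2, Real.sqrt_mul (sq_nonneg _), Real.sqrt_sq (by positivity)]
      rw [hq1def, hΛdef]
      ring
    have hρy : r * Λ / n ≤ y / n := by gcongr
    have hρ0 : 0 ≤ r * Λ / n := by positivity
    have hBle : ∑ t ∈ Finset.range n, (n:ℝ)^(t+2) * ((4 * ((t:ℝ)+2)^2) *
          ((c/n)^2 * (2 * Real.sqrt (q2/q0) * (q1 + Real.sqrt (q0*q2))^(t+1))))
        ≤ K / n := by
      have hterm : ∀ t : ℕ, (n:ℝ)^(t+2) * ((4 * ((t:ℝ)+2)^2) *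
            ((c/n)^2 * (2 * Real.sqrt (q2/q0) * (q1 + Real.sqrt (q0*q2))^(t+1))))
          ≤ (8 * sq * c^2 / n) * (((t:ℝ)+2)^2 * y^(t+1)) := by
        intro t
        rw [hsqeq, hρeq]
        have hp1 : (r * Λ / n)^(t+1) ≤ (y/n)^(t+1) := pow_le_pow_left₀ hρ0 hρy (t+1)
        calc (n:ℝ)^(t+2) * ((4 * ((t:ℝ)+2)^2) * ((c/n)^2 * (2 * sq * (r * Λ / n)^(t+1))))
            ≤ (n:ℝ)^(t+2) * ((4 * ((t:ℝ)+2)^2) * ((c/n)^2 * (2 * sq * (y/n)^(t+1)))) := by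
              gcongr
          _ = (8 * sq * c^2 / n) * (((t:ℝ)+2)^2 * y^(t+1)) := by
              rw [div_pow, div_pow]
              have hne : (n:ℝ) ≠ 0 := ne_of_gt hn0
              field_simp
              ring
      calc ∑ t ∈ Finset.range n, (n:ℝ)^(t+2) * ((4 * ((t:ℝ)+2)^2) *
            ((c/n)^2 * (2 * Real.sqrt (q2/q0) * (q1 + Real.sqrt (q0*q2))^(t+1))))
          ≤ ∑ t ∈ Finset.range n, (8 * sq * c^2 / n) * (((t:ℝ)+2)^2 * y^(t+1)) :=
            Finset.sum_le_sum fun t _ => hterm t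
        _ = (8 * sq * c^2 / n) * ∑ t ∈ Finset.range n, (((t:ℝ)+2)^2 * y^(t+1)) := by
            rw [Finset.mul_sum]
        _ ≤ (8 * sq * c^2 / n) * C0 := by
            refine mul_le_mul_of_nonneg_left ?_ (by positivity)
            exact Summable.sum_le_tsum (Finset.range n) (fun t _ => by positivity) hsum
        _ = K / n := by
            rw [hKdef]
            ring
    constructor
    · refine le_trans ?_ hB.1
      linarith [hBle]
    · exact hB.2
  have h1 : Filter.Tendsto (fun n : ℕ => 1 - K / (n:ℝ)) Filter.atTop (nhds 1) := by
    have h := tendsto_const_div_atTop_nhds_zero_nat K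
    have := Filter.Tendsto.const_sub (1:ℝ) h
    simpa using this
  refine tendsto_of_tendsto_of_tendsto_of_le_of_le' h1 tendsto_const_nhds ?_ ?_
  · exact hbound.mono fun n h => h.1
  · exact hbound.mono fun n h => h.2
end

section
/- Fix ε > 0 and an integer k ≥ 2, and let m = ⌈(2^k·ln 2 + ε)·n⌉. A random k-SAT formula consisting of m clauses drawn independently and uniformly at random (with replacement) from the C(n,k)·2^k possible k-clauses is unsatisfiable with probability tending to 1 as n → ∞. -/
open Finset Filter

/-- The assignment `σ` satisfies the clause `C`. -/
def Sat {n k : ℕ} (σ : Fin n → Bool) (C : Clause n k) : Prop :=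
  ∃ p ∈ C.1, σ p.1 = p.2

/-- A formula (a finite sequence of clauses) is satisfiable. -/
def Satisfiable {n k m : ℕ} (Φ : Fin m → Clause n k) : Prop :=
  ∃ σ : Fin n → Bool, ∀ i, Sat σ (Φ i)

/-- The Achlioptas rule: select the first among the first `l - 1` presented clauses
containing at least two positive literals; if there is none, select the `l`-th clause. -/
def select {n k l : ℕ} (hl : 0 < l) (cs : Fin l → Clause n k) : Clause n k :=
  match (List.finRange l).find? (fun i => decide (i.1 + 1 < l ∧ 2 ≤ (cs i).posCount)) with
  | some i => cs i
  | none => cs ⟨l - 1, Nat.sub_lt hl one_pos⟩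

/-- The probability of the event `P` under the uniform distribution on the finite type `α`;
in particular, for `α = Fin m → Fin l → Clause n k` this is the probability that `P` holds
for `m` rounds of `l` clauses drawn independently and uniformly at random with replacement. -/
noncomputable def unifProb {α : Type*} [Fintype α] (P : α → Prop) : ℝ :=
  (Nat.card {a // P a} : ℝ) / (Fintype.card α : ℝ)

lemma clause_injOn {n k : ℕ} (C : Clause n k) : Set.InjOn Prod.fst (C.1 : Set (Lit n)) := by
  rw [← Finset.card_image_iff]
  rw [C.2.2, C.2.1]

def mkClause {n k : ℕ} {s : Finset (Fin n)} (hs : s.card = k) (g : {x // x ∈ s} → Bool) :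
    Clause n k :=
  ⟨s.attach.image (fun i : {x // x ∈ s} => (i.1, g i)), by
    have hinj : Function.Injective (fun i : {x // x ∈ s} => (i.1, g i)) := by
      intro i j hij
      exact Subtype.ext (congrArg Prod.fst hij)
    constructor
    · rw [Finset.card_image_of_injective _ hinj, Finset.card_attach, hs]
    · rw [Finset.image_image]
      have : (Prod.fst ∘ fun i : {x // x ∈ s} => (i.1, g i)) = fun i => i.1 := rfl
      rw [this, Finset.attach_image_val, hs]⟩

lemma mkClause_image {n k : ℕ} {s : Finset (Fin n)} (hs : s.card = k) (g : {x // x ∈ s} → Bool) :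
    (mkClause hs g).1.image Prod.fst = s := by
  simp only [mkClause, Finset.image_image]
  have : (Prod.fst ∘ fun i : {x // x ∈ s} => (i.1, g i)) = fun i => i.1 := rfl
  rw [this, Finset.attach_image_val]

lemma mem_mkClause {n k : ℕ} {s : Finset (Fin n)} (hs : s.card = k) (g : {x // x ∈ s} → Bool)
    (a : Fin n) (b : Bool) :
    (a, b) ∈ (mkClause hs g).1 ↔ ∃ h : a ∈ s, g ⟨a, h⟩ = b := by
  simp only [mkClause, Finset.mem_image, Finset.mem_attach, true_and, Prod.mk.injEq]
  constructor
  · rintro ⟨⟨i, hi⟩, hi1, hi2⟩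
    subst hi1
    exact ⟨hi, hi2⟩
  · rintro ⟨h, hg⟩
    exact ⟨⟨a, h⟩, rfl, hg⟩

-- every member of a clause: the clause is mkClause of its own data
lemma clause_eq_mkClause {n k : ℕ} (C : Clause n k) (g : {x // x ∈ C.1.image Prod.fst} → Bool)
    (hg : ∀ (a : Fin n) (b : Bool) (h : (a, b) ∈ C.1), g ⟨a, Finset.mem_image_of_mem _ h⟩ = b) :
    mkClause C.2.2 g = C := by
  apply Subtype.ext
  ext ⟨a, b⟩
  rw [mem_mkClause]
  constructor
  · rintro ⟨h, hgab⟩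
    obtain ⟨⟨a', b'⟩, hmem, rfl⟩ := Finset.mem_image.mp h
    have := hg a' b' hmem
    rw [this] at hgab
    rwa [← hgab]
  · intro hab
    exact ⟨Finset.mem_image_of_mem _ hab, hg a b hab⟩

lemma fiber_card {n k : ℕ} {s : Finset (Fin n)} (hs : s.card = k) :
    ((Finset.univ : Finset (Clause n k)).filter
        (fun C => C.1.image Prod.fst = s)).card = 2 ^ k := by
  classical
  have h2 : Fintype.card ({x // x ∈ s} → Bool) = 2 ^ k := by
    simp [Fintype.card_fun, hs]
  rw [← h2, ← Finset.card_univ]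
  apply Finset.card_bij' (fun C _ => fun i : {x // x ∈ s} => decide ((i.1, true) ∈ C.1))
      (fun g _ => mkClause hs g)
  · intro C hC
    exact Finset.mem_univ _
  · intro g _
    rw [Finset.mem_filter]
    exact ⟨Finset.mem_univ _, mkClause_image hs g⟩
  · intro C hC
    rw [Finset.mem_filter] at hC
    obtain ⟨-, hC⟩ := hC
    subst hC
    apply clause_eq_mkClause
    intro a b hab
    cases b
    · simp only [decide_eq_false_iff_not]
      intro htrue
      have := clause_injOn C (Finset.mem_coe.mpr htrue) (Finset.mem_coe.mpr hab) rfl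
      simp at this
    · simp [hab]
  · intro g _
    funext i
    simp only [mem_mkClause]
    rcases hb : g i with _ | _
    · simp only [decide_eq_false_iff_not]
      rintro ⟨h, hgi⟩
      rw [Subtype.coe_eta, hb] at hgi
      exact Bool.false_ne_true hgi
    · simp only [decide_eq_true_eq]
      exact ⟨i.2, by rw [Subtype.coe_eta, hb]⟩

lemma card_clause (n k : ℕ) :
    Fintype.card (Clause n k) = n.choose k * 2 ^ k := by
  classical
  rw [← Finset.card_univ]
  rw [Finset.card_eq_sum_card_fiberwise
      (f := fun C : Clause n k => C.1.image Prod.fst)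
      (t := Finset.powersetCard k Finset.univ)
      (fun C _ => Finset.mem_powersetCard_univ.mpr C.2.2)]
  rw [Finset.sum_congr rfl
      (fun s hs => fiber_card (Finset.mem_powersetCard_univ.mp hs))]
  rw [Finset.sum_const, smul_eq_mul, Finset.card_powersetCard, Finset.card_univ, Fintype.card_fin]

instance satDecidable {n k : ℕ} (σ : Fin n → Bool) : DecidablePred (Sat (k := k) σ) :=
  fun C => decidable_of_iff (∃ p ∈ C.1, σ p.1 = p.2) Iff.rfl

lemma card_unsat {n k : ℕ} (σ : Fin n → Bool) :
    ((Finset.univ : Finset (Clause n k)).filter (fun C => ¬ Sat σ C)).card = n.choose k := by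
  classical
  have hrhs : n.choose k = (Finset.powersetCard k (Finset.univ : Finset (Fin n))).card := by
    simp [Finset.card_powersetCard]
  rw [hrhs]
  refine Finset.card_bij' (fun C _ => C.1.image Prod.fst)
      (fun s hs => mkClause (Finset.mem_powersetCard_univ.mp hs) (fun i => !σ i.1))
      ?_ ?_ ?_ ?_
  · intro C _
    exact Finset.mem_powersetCard_univ.mpr C.2.2
  · intro s hs
    rw [Finset.mem_filter]
    refine ⟨Finset.mem_univ _, ?_⟩
    rintro ⟨⟨a, b⟩, hmem, hσ⟩
    rw [mem_mkClause] at hmem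
    obtain ⟨h, hg⟩ := hmem
    simp only at hσ
    rw [← hg] at hσ
    simp at hσ
  · intro C hC
    rw [Finset.mem_filter] at hC
    obtain ⟨-, hC⟩ := hC
    apply clause_eq_mkClause
    intro a b hab
    have : σ a ≠ b := fun h => hC ⟨(a, b), hab, h⟩
    cases b <;> cases hσa : σ a <;> simp_all
  · intro s hs
    exact mkClause_image _ _

lemma card_sat {n k : ℕ} (σ : Fin n → Bool) :
    ((Finset.univ : Finset (Clause n k)).filter (fun C => Sat σ C)).card
      = n.choose k * 2 ^ k - n.choose k := by
  have h := Finset.card_filter_add_card_filter_not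
    (s := (Finset.univ : Finset (Clause n k))) (p := fun C => Sat σ C)
  rw [card_unsat σ, Finset.card_univ, card_clause n k] at h
  omega

lemma card_formulas_sat {n k m : ℕ} (σ : Fin n → Bool) :
    ((Finset.univ : Finset (Fin m → Clause n k)).filter
        (fun Φ => ∀ i, Sat σ (Φ i))).card
      = (n.choose k * 2 ^ k - n.choose k) ^ m := by
  classical
  rw [← Fintype.card_subtype]
  rw [Fintype.card_congr (Equiv.subtypePiEquivPi (p := fun _ C => Sat σ C))]
  rw [Fintype.card_pi]
  rw [Finset.prod_congr rfl (fun i _ => (Fintype.card_subtype _).trans (card_sat σ))]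
  rw [Finset.prod_const, Finset.card_univ, Fintype.card_fin]

lemma card_satisfiable_le (n k m : ℕ) :
    Nat.card {Φ : Fin m → Clause n k // Satisfiable Φ}
      ≤ 2 ^ n * (n.choose k * 2 ^ k - n.choose k) ^ m := by
  classical
  rw [Nat.card_eq_fintype_card, Fintype.card_subtype]
  calc ((Finset.univ : Finset (Fin m → Clause n k)).filter (fun Φ => Satisfiable Φ)).card
      ≤ ((Finset.univ : Finset (Fin n → Bool)).biUnion (fun σ =>
          (Finset.univ : Finset (Fin m → Clause n k)).filter
            (fun Φ => ∀ i, Sat σ (Φ i)))).card := by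
        apply Finset.card_le_card
        intro Φ hΦ
        rw [Finset.mem_filter] at hΦ
        obtain ⟨-, σ, hσ⟩ := hΦ
        rw [Finset.mem_biUnion]
        exact ⟨σ, Finset.mem_univ _, Finset.mem_filter.mpr ⟨Finset.mem_univ _, hσ⟩⟩
    _ ≤ ∑ σ : Fin n → Bool, ((Finset.univ : Finset (Fin m → Clause n k)).filter
            (fun Φ => ∀ i, Sat σ (Φ i))).card := Finset.card_biUnion_le
    _ = ∑ _σ : Fin n → Bool, (n.choose k * 2 ^ k - n.choose k) ^ m :=
        Finset.sum_congr rfl (fun σ _ => card_formulas_sat σ)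
    _ = 2 ^ n * (n.choose k * 2 ^ k - n.choose k) ^ m := by
        rw [Finset.sum_const, Finset.card_univ, Fintype.card_fun, Fintype.card_bool,
          Fintype.card_fin, smul_eq_mul]

/-- For `k ≥ 2` and `ε > 0`, a random `k`-SAT formula of `⌈(2^k * ln 2 + ε) * n⌉` clauses
drawn independently and uniformly at random (with replacement) is unsatisfiable with
probability tending to `1` as `n → ∞`. -/
theorem random_ksat_first_moment_unsat (k : ℕ) (hk : 2 ≤ k) (ε : ℝ) (hε : 0 < ε) :
    Tendsto (fun n : ℕ =>
        unifProb (fun Φ : Fin (⌈((2 : ℝ) ^ k * Real.log 2 + ε) * n⌉₊) → Clause n k =>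
          ¬ Satisfiable Φ))
      atTop (nhds 1) := by
  classical
  set c : ℝ := (2:ℝ)^k * Real.log 2 + ε with hc
  set r : ℝ := 1 - ((2:ℝ)^k)⁻¹ with hr
  have h2k : (1:ℝ) < (2:ℝ)^k := one_lt_pow₀ (by norm_num) (by omega)
  have hinv : (0:ℝ) < ((2:ℝ)^k)⁻¹ := by positivity
  have hinv1 : ((2:ℝ)^k)⁻¹ < 1 := by
    rw [inv_lt_one_iff₀]; right; exact h2k
  have hrpos : 0 < r := by rw [hr]; linarith
  have hlog2 : (0:ℝ) < Real.log 2 := Real.log_pos (by norm_num)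
  have hcpos : 0 < c := by
    rw [hc]; positivity
  -- the exponential bound
  have key : ∀ n : ℕ, (2:ℝ)^n * r ^ ⌈c * n⌉₊ ≤ Real.exp (-(ε * ((2:ℝ)^k)⁻¹) * n) := by
    intro n
    have hm : c * n ≤ (⌈c * n⌉₊ : ℝ) := Nat.le_ceil _
    have h1 : r ≤ Real.exp (-((2:ℝ)^k)⁻¹) := by
      have := Real.add_one_le_exp (-((2:ℝ)^k)⁻¹)
      rw [hr]; linarith
    have h2 : r ^ ⌈c * n⌉₊ ≤ Real.exp (-((2:ℝ)^k)⁻¹) ^ ⌈c * n⌉₊ :=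
      pow_le_pow_left₀ hrpos.le h1 _
    have h3 : Real.exp (-((2:ℝ)^k)⁻¹) ^ ⌈c * n⌉₊
        = Real.exp (-((2:ℝ)^k)⁻¹ * ⌈c * n⌉₊) := by
      rw [← Real.exp_nat_mul]; ring_nf
    have h2n : (2:ℝ)^n = Real.exp (n * Real.log 2) := by
      rw [Real.exp_nat_mul, Real.exp_log (by norm_num)]
    calc (2:ℝ)^n * r ^ ⌈c * n⌉₊
        ≤ (2:ℝ)^n * Real.exp (-((2:ℝ)^k)⁻¹ * ⌈c * n⌉₊) := by
          rw [← h3]; exact mul_le_mul_of_nonneg_left h2 (by positivity)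
      _ ≤ (2:ℝ)^n * Real.exp (-((2:ℝ)^k)⁻¹ * (c * n)) := by
          apply mul_le_mul_of_nonneg_left _ (by positivity)
          apply Real.exp_le_exp.mpr
          nlinarith [mul_le_mul_of_nonneg_left hm hinv.le]
      _ = Real.exp (n * Real.log 2 + -((2:ℝ)^k)⁻¹ * (c * n)) := by
          rw [h2n, ← Real.exp_add]
      _ ≤ Real.exp (-(ε * ((2:ℝ)^k)⁻¹) * n) := by
          apply Real.exp_le_exp.mpr
          apply le_of_eq
          rw [hc]
          field_simp
          ring
  -- tendsto of the bounding sequence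
  have hbound : Tendsto (fun n : ℕ => (2:ℝ)^n * r ^ ⌈c * n⌉₊) atTop (nhds 0) := by
    have hexp : Tendsto (fun n : ℕ => Real.exp (-(ε * ((2:ℝ)^k)⁻¹) * n)) atTop (nhds 0) := by
      apply Real.tendsto_exp_atBot.comp
      apply Tendsto.const_mul_atTop_of_neg (by nlinarith : -(ε * ((2:ℝ)^k)⁻¹) < 0)
      exact tendsto_natCast_atTop_atTop
    apply tendsto_of_tendsto_of_tendsto_of_le_of_le tendsto_const_nhds hexp
    · intro n; positivity
    · exact key
  -- upper bound
  have hup : ∀ n : ℕ,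
      unifProb (fun Φ : Fin ⌈c * n⌉₊ → Clause n k => ¬ Satisfiable Φ) ≤ 1 := by
    intro n
    unfold unifProb
    apply div_le_one_of_le₀
    · exact_mod_cast Nat.card_eq_fintype_card (α := {Φ : Fin ⌈c * n⌉₊ → Clause n k // ¬ Satisfiable Φ}) ▸
        Nat.cast_le.mpr (Fintype.card_subtype_le _)
    · positivity
  -- lower bound for n ≥ k
  have hlow : ∀ n : ℕ, k ≤ n →
      1 - (2:ℝ)^n * r ^ ⌈c * n⌉₊ ≤
        unifProb (fun Φ : Fin ⌈c * n⌉₊ → Clause n k => ¬ Satisfiable Φ) := by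
    intro n hn
    set m := ⌈c * n⌉₊ with hmdef
    have hN : 0 < n.choose k := Nat.choose_pos hn
    have hNR : (0:ℝ) < (n.choose k : ℝ) := by exact_mod_cast hN
    have hT : Fintype.card (Fin m → Clause n k) = (n.choose k * 2^k)^m := by
      rw [Fintype.card_fun, Fintype.card_fin, card_clause]
    have hTR : (0:ℝ) < (((n.choose k * 2^k)^m : ℕ) : ℝ) := by positivity
    have hA' : Nat.card {Φ : Fin m → Clause n k // Satisfiable Φ} ≤ (n.choose k * 2^k)^m := by
      rw [Nat.card_eq_fintype_card, ← hT]
      exact Fintype.card_subtype_le _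
    have hcompl : Nat.card {Φ : Fin m → Clause n k // ¬ Satisfiable Φ}
        = (n.choose k * 2^k)^m - Nat.card {Φ : Fin m → Clause n k // Satisfiable Φ} := by
      rw [Nat.card_eq_fintype_card, Nat.card_eq_fintype_card, Fintype.card_subtype_compl, hT]
    have hle : n.choose k ≤ n.choose k * 2^k :=
      Nat.le_mul_of_pos_right _ (by positivity)
    have hST : ((n.choose k * 2^k - n.choose k : ℕ) : ℝ)
        = r * ((n.choose k * 2^k : ℕ) : ℝ) := by
      rw [Nat.cast_sub hle]
      push_cast
      rw [hr]
      have h2kne : ((2:ℝ)^k) ≠ 0 := by positivity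
      field_simp
    have hA2 : (Nat.card {Φ : Fin m → Clause n k // Satisfiable Φ} : ℝ)
        ≤ (2:ℝ)^n * r^m * (((n.choose k * 2^k)^m : ℕ) : ℝ) := by
      calc (Nat.card {Φ : Fin m → Clause n k // Satisfiable Φ} : ℝ)
          ≤ ((2^n * (n.choose k * 2^k - n.choose k)^m : ℕ) : ℝ) := by
            exact_mod_cast card_satisfiable_le n k m
        _ = (2:ℝ)^n * (((n.choose k * 2^k - n.choose k : ℕ) : ℝ))^m := by push_cast; ring
        _ = (2:ℝ)^n * r^m * (((n.choose k * 2^k : ℕ) : ℝ))^m := by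
            rw [hST, mul_pow]; ring
        _ = (2:ℝ)^n * r^m * (((n.choose k * 2^k)^m : ℕ) : ℝ) := by push_cast; ring
    unfold unifProb
    rw [hcompl, hT, Nat.cast_sub hA', sub_div, div_self (ne_of_gt hTR)]
    have hdiv : (Nat.card {Φ : Fin m → Clause n k // Satisfiable Φ} : ℝ)
        / (((n.choose k * 2^k)^m : ℕ) : ℝ) ≤ (2:ℝ)^n * r^m := by
      rw [div_le_iff₀ hTR]
      exact hA2
    linarith
  -- conclude by squeezing
  have hg : Tendsto (fun n : ℕ => 1 - (2:ℝ)^n * r ^ ⌈c * n⌉₊) atTop (nhds 1) := by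
    have h1 : Tendsto (fun _ : ℕ => (1:ℝ)) atTop (nhds 1) := tendsto_const_nhds
    simpa using h1.sub hbound
  apply tendsto_of_tendsto_of_tendsto_of_le_of_le' hg tendsto_const_nhds
  · filter_upwards [eventually_ge_atTop k] with n hn using hlow n hn
  · filter_upwards with n using hup n
end
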